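/- arXiv:2203.07061 — 7 statements merged into one kernel-verified Lean document; each statement's English description precedes it below -/
import Mathlib

section
/- Let f ∈ ℤ[x] be a monic polynomial with f(0) ≠ 0 such that every complex root of f has absolute value at most 1. Then every complex root of f is a root of unity. -/
open Polynomial

/-- Kronecker's theorem: a monic integer polynomial with nonzero constant term
whose complex roots all lie in the closed unit disk has only roots of unity as roots. -/
theorem kronecker (f : Polynomial ℤ) (hmonic : f.Monic) (h0 : f.eval 0 ≠ 0)
    (hroots : ∀ z : ℂ, (f.map (Int.castRingHom ℂ)).IsRoot z → ‖z‖ ≤ 1) :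
    ∀ z : ℂ, (f.map (Int.castRingHom ℂ)).IsRoot z → ∃ n : ℕ, 0 < n ∧ z ^ n = 1 := by
  have hcast : (Int.castRingHom ℂ) = algebraMap ℤ ℂ := rfl
  classical
  intro z hz
  have hz' : Polynomial.aeval z f = 0 := by
    rw [Polynomial.aeval_def, ← hcast, ← Polynomial.eval_map]
    exact hz
  have hzne : z ≠ 0 := by
    rintro rfl
    apply h0
    have h1 : Polynomial.aeval (0 : ℂ) f = ((f.eval 0 : ℤ) : ℂ) := by
      simp [Polynomial.aeval_def, Polynomial.eval₂_at_zero, Polynomial.coeff_zero_eq_eval_zero]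
    rw [hz'] at h1
    exact_mod_cast h1.symm
  -- z is an algebraic integer
  have hint : IsIntegral ℤ z := ⟨f, hmonic, hz'⟩
  have hintQ : IsIntegral ℚ z := hint.tower_top
  set K := IntermediateField.adjoin ℚ ({z} : Set ℂ) with hK
  haveI : FiniteDimensional ℚ K := IntermediateField.adjoin.finiteDimensional hintQ
  haveI : NumberField K := ⟨⟩
  set x : K := IntermediateField.AdjoinSimple.gen ℚ z with hx
  have hxz : (algebraMap K ℂ) x = z := rfl
  have haxf : Polynomial.aeval x f = 0 := by
    apply (map_eq_zero_iff _ (algebraMap K ℂ).injective).mp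
    rw [← Polynomial.aeval_algebraMap_apply, hxz, hz']
  have hxint : IsIntegral ℤ x := ⟨f, hmonic, haxf⟩
  have hxne : x ≠ 0 := by
    intro h
    apply hzne
    rw [← hxz, h, map_zero]
  -- every embedding sends x to a root of f
  have hembroot : ∀ σ : K →ₐ[ℚ] ℂ, (f.map (Int.castRingHom ℂ)).IsRoot (σ x) := by
    intro σ
    have h2 : Polynomial.aeval (σ.toRingHom.toIntAlgHom x) f = 0 := by
      rw [Polynomial.aeval_algHom_apply, haxf, map_zero]
    rwa [Polynomial.IsRoot, Polynomial.eval_map, hcast, ← Polynomial.aeval_def]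
  have hemb : ∀ σ : K →ₐ[ℚ] ℂ, ‖σ x‖ ≤ 1 := fun σ => hroots _ (hembroot σ)
  -- the product of the absolute values of the conjugates is |N(x)| ≥ 1
  have hnormne : Algebra.norm ℚ x ≠ 0 := by
    rw [Algebra.norm_ne_zero_iff]
    exact hxne
  have hnormint : IsIntegral ℤ (Algebra.norm ℚ x) := Algebra.isIntegral_norm ℚ hxint
  obtain ⟨m, hm⟩ := IsIntegrallyClosed.isIntegral_iff.mp hnormint
  have hmne : m ≠ 0 := by
    rintro rfl
    simp at hm
    exact hnormne hm.symm
  have hprod : (1 : ℝ) ≤ ∏ σ : K →ₐ[ℚ] ℂ, ‖σ x‖ := by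
    have h3 : ((Algebra.norm ℚ x : ℚ) : ℂ) = ∏ σ : K →ₐ[ℚ] ℂ, σ x :=
      Algebra.norm_eq_prod_embeddings ℚ ℂ x
    have h4 : ‖((Algebra.norm ℚ x : ℚ) : ℂ)‖ = ∏ σ : K →ₐ[ℚ] ℂ, ‖σ x‖ := by
      rw [h3, norm_prod]
    rw [← h4, ← hm, eq_intCast, Rat.cast_intCast, Complex.norm_intCast]
    exact_mod_cast Int.one_le_abs hmne
  -- hence each conjugate has absolute value exactly 1
  have habs1 : ∀ σ : K →ₐ[ℚ] ℂ, ‖σ x‖ = 1 := by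
    intro σ
    by_contra hne
    have hlt : ‖σ x‖ < 1 := lt_of_le_of_ne (hemb σ) hne
    have : ∏ τ : K →ₐ[ℚ] ℂ, ‖τ x‖ < 1 := by
      calc ∏ τ : K →ₐ[ℚ] ℂ, ‖τ x‖
          = ‖σ x‖ * ∏ τ ∈ Finset.univ.erase σ, ‖τ x‖ :=
            (Finset.mul_prod_erase Finset.univ _ (Finset.mem_univ σ)).symm
        _ ≤ ‖σ x‖ * 1 := by
            gcongr
            exact Finset.prod_le_one (fun τ _ => norm_nonneg _) (fun τ _ => hemb τ)
        _ < 1 := by rwa [mul_one]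
    exact absurd hprod (not_le.mpr this)
  -- apply the standard result on algebraic integers with all conjugates of norm 1
  obtain ⟨n, hn, hxn⟩ := NumberField.Embeddings.pow_eq_one_of_norm_eq_one K ℂ hxint
    (fun φ : K →+* ℂ => by
      have := habs1 φ.toRatAlgHom
      simpa using this)
  refine ⟨n, hn, ?_⟩
  have : (algebraMap K ℂ) (x ^ n) = 1 := by rw [hxn, map_one]
  rw [map_pow, hxz] at this
  exact this
end

section
/- There is no monic polynomial f ∈ ℤ[x] of degree 5 with constant coefficient ±1 such that (H1) f has at least four distinct roots of maximal modulus among all roots of f, and (H2) no quotient of two distinct roots of f is a root of unity. -/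
open Polynomial
open IntermediateField

private lemma aux_absprod (s : Multiset ℂ) :
    ‖s.prod‖ = (s.map (‖·‖)).prod := by
  induction s using Multiset.induction_on with
  | empty => simp
  | cons x s ih => simp [map_mul, ih]

private lemma aux_prodbound (r : ℝ) (hr : 0 ≤ r) (s : Multiset ℂ)
    (h : ∀ x ∈ s, ‖x‖ ≤ r) :
    (s.map (‖·‖)).prod ≤ r ^ Multiset.card s := by
  induction s using Multiset.induction_on with
  | empty => simp
  | cons x s ih =>
    simp only [Multiset.map_cons, Multiset.prod_cons, Multiset.card_cons]
    calc ‖x‖ * (s.map (‖·‖)).prod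
        ≤ r * r ^ Multiset.card s := by
          apply mul_le_mul (h x (Multiset.mem_cons_self x s)) (ih ?_) ?_ hr
          · exact fun y hy => h y (Multiset.mem_cons_of_mem hy)
          · exact Multiset.prod_nonneg (by
              intro y hy
              obtain ⟨z, _, rfl⟩ := Multiset.mem_map.mp hy
              exact norm_nonneg z)
      _ = r ^ (Multiset.card s + 1) := by ring

private lemma aux_prodnonneg (s : Multiset ℂ) : 0 ≤ (s.map (‖·‖)).prod := by
  apply Multiset.prod_nonneg
  intro y hy
  obtain ⟨z, _, rfl⟩ := Multiset.mem_map.mp hy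
  exact norm_nonneg z

private lemma aux_hom_root {S T : Type*} [CommRing S] [CommRing T] (ψ : S →+* T)
    (f : Polynomial ℤ) (x : S) (h : Polynomial.aeval x f = 0) :
    Polynomial.aeval (ψ x) f = 0 := by
  rw [show ψ x = ψ.toIntAlgHom x from rfl, Polynomial.aeval_algHom_apply, h, map_zero]

private lemma aux_kron (f : Polynomial ℤ) (hmo : f.Monic) (z : ℂ)
    (hz : Polynomial.aeval z f = 0)
    (hall : ∀ w : ℂ, Polynomial.aeval w f = 0 → ‖w‖ = 1) :
    ∃ n : ℕ, 0 < n ∧ z ^ n = 1 := by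
  have hint : IsIntegral ℤ z := ⟨f, hmo, by rwa [← Polynomial.aeval_def]⟩
  have hQ : IsIntegral ℚ z := hint.tower_top
  haveI := IntermediateField.adjoin.finiteDimensional hQ
  set K := ℚ⟮z⟯
  haveI : NumberField K := ⟨⟩
  set x : K := IntermediateField.AdjoinSimple.gen ℚ z with hx
  have hmapx : algebraMap K ℂ x = z := IntermediateField.AdjoinSimple.algebraMap_gen ℚ z
  have hxint : IsIntegral ℤ x := by
    rw [← isIntegral_algebraMap_iff (algebraMap K ℂ).injective, hmapx]; exact hint
  have hxroot : Polynomial.aeval x f = 0 := by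
    have := aux_hom_root (algebraMap K ℂ) f x
    have h0 : Polynomial.aeval (algebraMap K ℂ x) f = 0 := by rw [hmapx]; exact hz
    have : (algebraMap K ℂ) (Polynomial.aeval x f) = 0 := by
      rw [show (algebraMap K ℂ) ((Polynomial.aeval x) f) = (algebraMap K ℂ).toIntAlgHom ((Polynomial.aeval x) f) from rfl, ← Polynomial.aeval_algHom_apply]; exact h0
    exact (map_eq_zero_iff _ (algebraMap K ℂ).injective).mp this
  obtain ⟨n, hn, hxn⟩ := NumberField.Embeddings.pow_eq_one_of_norm_eq_one K ℂ hxint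
    (fun φ => by
      exact hall _ (aux_hom_root φ f x hxroot))
  refine ⟨n, hn, ?_⟩
  have := congrArg (algebraMap K ℂ) hxn
  rwa [map_pow, map_one, hmapx] at this

private lemma aux_root_down {S : Type*} [CommRing S] (ψ : S →+* ℂ) (hinj : Function.Injective ψ)
    (f : Polynomial ℤ) (x : S) (h : Polynomial.aeval (ψ x) f = 0) :
    Polynomial.aeval x f = 0 := by
  apply hinj
  rw [show ψ ((Polynomial.aeval x) f) = ψ.toIntAlgHom ((Polynomial.aeval x) f) from rfl,
    ← Polynomial.aeval_algHom_apply, map_zero]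
  exact h

private lemma aux_num (r : ℝ) (hr_gt : 1 < r) :
    ∀ α β : ℝ, (α = r ∨ α = 1/r^4) → (β = r ∨ β = 1/r^4) →
      r * (α * β)^2 = 1 → False := by
  have hpow58 : (1:ℝ) < r ^ 5 := one_lt_pow₀ hr_gt (by norm_num)
  have hrpos : (0:ℝ) < r := lt_trans one_pos hr_gt
  have hrne : r ≠ 0 := ne_of_gt hrpos
  intro α β h1 h2 hf
  rcases h1 with h1 | h1 <;> rcases h2 with h2 | h2 <;> rw [h1, h2] at hf
  · have h5 : r ^ 5 = 1 := by linear_combination hf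
    linarith
  · field_simp at hf
    nlinarith [pow_lt_pow_right₀ hr_gt (show 3 < 8 by norm_num)]
  · field_simp at hf
    nlinarith [pow_lt_pow_right₀ hr_gt (show 3 < 8 by norm_num)]
  · field_simp at hf
    nlinarith [pow_lt_pow_right₀ hr_gt (show 1 < 16 by norm_num)]

/-- No monic degree-5 integer polynomial with constant coefficient ±1 has at least four
distinct dominant roots while no quotient of two distinct roots is a root of unity. -/
theorem no_degree_5_candidate :
    ¬ ∃ f : Polynomial ℤ, f.Monic ∧ f.natDegree = 5 ∧
      (f.coeff 0 = 1 ∨ f.coeff 0 = -1) ∧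
      (∃ a b c d : ℂ,
        a ≠ b ∧ a ≠ c ∧ a ≠ d ∧ b ≠ c ∧ b ≠ d ∧ c ≠ d ∧
        (f.map (Int.castRingHom ℂ)).IsRoot a ∧ (f.map (Int.castRingHom ℂ)).IsRoot b ∧
        (f.map (Int.castRingHom ℂ)).IsRoot c ∧ (f.map (Int.castRingHom ℂ)).IsRoot d ∧
        (∀ μ : ℂ, (f.map (Int.castRingHom ℂ)).IsRoot μ → ‖μ‖ ≤ ‖a‖) ∧
        (∀ μ : ℂ, (f.map (Int.castRingHom ℂ)).IsRoot μ → ‖μ‖ ≤ ‖b‖) ∧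
        (∀ μ : ℂ, (f.map (Int.castRingHom ℂ)).IsRoot μ → ‖μ‖ ≤ ‖c‖) ∧
        (∀ μ : ℂ, (f.map (Int.castRingHom ℂ)).IsRoot μ → ‖μ‖ ≤ ‖d‖)) ∧
      (∀ lam mu : ℂ, (f.map (Int.castRingHom ℂ)).IsRoot lam →
        (f.map (Int.castRingHom ℂ)).IsRoot mu → lam ≠ mu →
        ∀ n : ℕ, 0 < n → (lam / mu) ^ n ≠ 1) := by
  rintro ⟨f, hm, hd, hc0, ⟨a, b, c, d, hab, hac, had, hbc, hbd, hcd,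
    ha, hb, hc, hd', hdoma, hdomb, hdomc, hdomd⟩, H2⟩
  set F : Polynomial ℂ := f.map (Int.castRingHom ℂ) with hF
  have hFm : F.Monic := hm.map _
  have hF0 : F ≠ 0 := hFm.ne_zero
  have hFdeg : F.natDegree = 5 := by rw [hF, hm.natDegree_map]; exact hd
  -- root ↔ aeval
  have hroot_iff : ∀ x : ℂ, F.IsRoot x ↔ Polynomial.aeval x f = 0 := by
    intro x
    rw [Polynomial.IsRoot, Polynomial.aeval_def, Polynomial.eval₂_eq_eval_map,
      algebraMap_int_eq, ← hF]
  -- roots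
  have hcard : Multiset.card F.roots = 5 := by
    rw [← hFdeg]
    exact (Polynomial.splits_iff_card_roots).mp (IsAlgClosed.splits F)
  have hmemR : ∀ x : ℂ, F.IsRoot x → x ∈ F.roots := fun x hx =>
    (Polynomial.mem_roots hF0).mpr hx
  have haR := hmemR a ha
  have hbR : b ∈ F.roots.erase a := (Multiset.mem_erase_of_ne hab.symm).mpr (hmemR b hb)
  have hcR : c ∈ (F.roots.erase a).erase b := by
    rw [Multiset.mem_erase_of_ne hbc.symm, Multiset.mem_erase_of_ne hac.symm]
    exact hmemR c hc
  have hdR : d ∈ ((F.roots.erase a).erase b).erase c := by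
    rw [Multiset.mem_erase_of_ne hcd.symm, Multiset.mem_erase_of_ne hbd.symm,
      Multiset.mem_erase_of_ne had.symm]
    exact hmemR d hd'
  obtain ⟨e, he⟩ : ∃ e, (((F.roots.erase a).erase b).erase c).erase d = {e} := by
    rw [← Multiset.card_eq_one]
    rw [Multiset.card_erase_of_mem hdR, Multiset.card_erase_of_mem hcR,
      Multiset.card_erase_of_mem hbR, Multiset.card_erase_of_mem haR, hcard]
    rfl
  have hRdecomp : F.roots = a ::ₘ b ::ₘ c ::ₘ d ::ₘ {e} := by
    rw [← he, Multiset.cons_erase hdR, Multiset.cons_erase hcR, Multiset.cons_erase hbR,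
      Multiset.cons_erase haR]
  have he_root : F.IsRoot e := by
    have : e ∈ F.roots := by
      rw [hRdecomp]
      simp
    exact (Polynomial.mem_roots hF0).mp this
  have hmem5 : ∀ μ ∈ F.roots, μ = a ∨ μ = b ∨ μ = c ∨ μ = d ∨ μ = e := by
    intro μ hμ
    rw [hRdecomp] at hμ
    simpa using hμ
  have hprodpoly := Polynomial.prod_multiset_X_sub_C_of_monic_of_roots_card_eq hFm
    (hcard.trans hFdeg.symm)
  have hprod : a * b * c * d * e = -(f.coeff 0 : ℂ) := by
    have h0 : F.eval 0 = (F.roots.map (fun ρ => -ρ)).prod := by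
      conv_lhs => rw [← hprodpoly]
      rw [Polynomial.eval_multiset_prod, Multiset.map_map]
      congr 1
      apply Multiset.map_congr rfl
      intro x _
      simp
    rw [hRdecomp] at h0
    simp only [Multiset.map_cons, Multiset.map_singleton, Multiset.prod_cons,
      Multiset.prod_singleton] at h0
    have hcoe : F.eval 0 = (f.coeff 0 : ℂ) := by
      rw [← Polynomial.coeff_zero_eq_eval_zero, hF, Polynomial.coeff_map]; rfl
    rw [hcoe] at h0
    linear_combination h0
  set η : ℂ := a * b * c * d * e with hηdef
  have hη : η = 1 ∨ η = -1 := by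
    rcases hc0 with h | h
    · right; rw [hprod, h]; norm_num
    · left; rw [hprod, h]; norm_num
  have hηabs : ‖η‖ = 1 := by rcases hη with h | h <;> simp [h]
  set r : ℝ := ‖a‖ with hrdef
  have habsb : ‖b‖ = r := le_antisymm (hdoma b hb) (hdomb a ha)
  have habsc : ‖c‖ = r := le_antisymm (hdoma c hc) (hdomc a ha)
  have habsd : ‖d‖ = r := le_antisymm (hdoma d hd') (hdomd a ha)
  have habse_le : ‖e‖ ≤ r := hdoma e he_root
  have habs_eq : r ^ 4 * ‖e‖ = 1 := by
    have h := hηabs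
    rw [hηdef, norm_mul, norm_mul, norm_mul, norm_mul, habsb, habsc, habsd] at h
    linear_combination h
  have hr0 : 0 ≤ r := norm_nonneg a
  have hr1 : 1 ≤ r := by
    by_contra hlt
    push_neg at hlt
    have h2 : r ^ 5 < 1 := pow_lt_one₀ hr0 hlt (by norm_num)
    have h1 : (1:ℝ) ≤ r ^ 5 := by
      calc (1:ℝ) = r^4 * ‖e‖ := habs_eq.symm
      _ ≤ r^4 * r := mul_le_mul_of_nonneg_left habse_le (by positivity)
      _ = r^5 := by ring
    linarith
  rcases eq_or_lt_of_le hr1 with hr_eq | hr_gt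
  · -- Case r = 1 : all roots are roots of unity (Kronecker)
    have hall : ∀ w : ℂ, Polynomial.aeval w f = 0 → ‖w‖ = 1 := by
      intro w hw
      have hwroot : F.IsRoot w := (hroot_iff w).mpr hw
      have hwR := hmemR w hwroot
      have hprodabs : ((F.roots).map (‖·‖)).prod = 1 := by
        rw [hRdecomp]
        simp only [Multiset.map_cons, Multiset.map_singleton, Multiset.prod_cons,
          Multiset.prod_singleton, habsb, habsc, habsd]
        linear_combination habs_eq
      have hsplit : F.roots = w ::ₘ F.roots.erase w := (Multiset.cons_erase hwR).symm
      have h1 : ‖w‖ * ((F.roots.erase w).map (‖·‖)).prod = 1 := by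
        rw [hsplit] at hprodabs
        simpa using hprodabs
      have hrest_le : ((F.roots.erase w).map (‖·‖)).prod ≤ 1 := by
        have hb := aux_prodbound 1 zero_le_one (F.roots.erase w) ?_
        · simpa using hb
        · intro x hx
          have hxr := Multiset.mem_of_mem_erase hx
          have hh := hdoma x ((Polynomial.mem_roots hF0).mp hxr)
          rw [← hr_eq] at hh
          exact hh
      have hwle : ‖w‖ ≤ 1 := by
        have hh := hdoma w hwroot; rw [← hr_eq] at hh; exact hh
      have hge : 1 ≤ ‖w‖ := by
        nlinarith [aux_prodnonneg (F.roots.erase w), norm_nonneg w]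
      exact le_antisymm hwle hge
    have hfa : Polynomial.aeval a f = 0 := (hroot_iff a).mp ha
    have hfb : Polynomial.aeval b f = 0 := (hroot_iff b).mp hb
    obtain ⟨n, hn, han⟩ := aux_kron f hm a hfa hall
    obtain ⟨k, hk, hbk⟩ := aux_kron f hm b hfb hall
    apply H2 a b ha hb hab (n * k) (Nat.mul_pos hn hk)
    have h1 : a ^ (n*k) = 1 := by rw [pow_mul, han, one_pow]
    have h2 : b ^ (n*k) = 1 := by rw [mul_comm, pow_mul, hbk, one_pow]
    rw [div_pow, h1, h2]; norm_num
  · -- Case r > 1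
    have hrpos : (0:ℝ) < r := lt_trans one_pos hr_gt
    have hrne : r ≠ 0 := ne_of_gt hrpos
    have habse : ‖e‖ = 1 / r ^ 4 := by
      rw [eq_div_iff (by positivity : (r:ℝ)^4 ≠ 0)]
      linear_combination habs_eq
    have habse_lt : ‖e‖ < 1 := by
      rw [habse, div_lt_one (by positivity)]
      have : (1:ℝ) < r ^ 4 := one_lt_pow₀ hr_gt (by norm_num)
      linarith
    have habse_ne : ‖e‖ ≠ r := by
      intro h; rw [h] at habse_lt; linarith
    have hconj_root : ∀ x : ℂ, F.IsRoot x → F.IsRoot ((starRingEnd ℂ) x) := by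
      intro x hx
      rw [hroot_iff] at hx ⊢
      exact aux_hom_root (starRingEnd ℂ) f x hx
    have hinvol : ∀ x : ℂ, (starRingEnd ℂ) ((starRingEnd ℂ) x) = x := Complex.conj_conj
    have he_real : (starRingEnd ℂ) e = e := by
      rcases hmem5 _ (hmemR _ (hconj_root e he_root)) with h|h|h|h|h
      · exact absurd (by rw [← Complex.norm_conj e, h] : ‖e‖ = r) habse_ne
      · exact absurd (by rw [← Complex.norm_conj e, h]; exact habsb) habse_ne
      · exact absurd (by rw [← Complex.norm_conj e, h]; exact habsc) habse_ne
      · exact absurd (by rw [← Complex.norm_conj e, h]; exact habsd) habse_ne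
      · exact h
    have hconj4 : ∀ x : ℂ, F.IsRoot x → ‖x‖ = r →
        ((starRingEnd ℂ) x = a ∨ (starRingEnd ℂ) x = b ∨ (starRingEnd ℂ) x = c ∨
          (starRingEnd ℂ) x = d) := by
      intro x hx hxr
      rcases hmem5 _ (hmemR _ (hconj_root x hx)) with h|h|h|h|h
      · exact Or.inl h
      · exact Or.inr (Or.inl h)
      · exact Or.inr (Or.inr (Or.inl h))
      · exact Or.inr (Or.inr (Or.inr h))
      · exfalso
        apply habse_ne
        rw [← h, Complex.norm_conj, hxr]
    have htwo : ∀ x y : ℂ, F.IsRoot x → F.IsRoot y → x ≠ y → ‖x‖ = r →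
        ‖y‖ = r → (starRingEnd ℂ) x = x → (starRingEnd ℂ) y = y → False := by
      intro x y hx hy hxy hxr hyr hcx hcy
      have hxre : (x.re : ℂ) = x := Complex.conj_eq_iff_re.mp hcx
      have hyre : (y.re : ℂ) = y := Complex.conj_eq_iff_re.mp hcy
      have hyne : y ≠ 0 := by
        intro h; rw [h] at hyr; simp at hyr; rw [← hyr] at hr_gt; linarith
      have hxabs : |x.re| = r := by rw [← Real.norm_eq_abs, ← Complex.norm_real, hxre]; exact hxr
      have hyabs : |y.re| = r := by rw [← Real.norm_eq_abs, ← Complex.norm_real, hyre]; exact hyr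
      have hxc := (abs_eq (le_of_lt hrpos)).mp hxabs
      have hyc := (abs_eq (le_of_lt hrpos)).mp hyabs
      have hxny : x = -y := by
        rcases hxc with h1|h1 <;> rcases hyc with h2|h2
        · exact absurd (by rw [← hxre, ← hyre, h1, h2] : x = y) hxy
        · rw [← hxre, ← hyre, h1, h2]; push_cast; ring
        · rw [← hxre, ← hyre, h1, h2]; push_cast; ring
        · exact absurd (by rw [← hxre, ← hyre, h1, h2] : x = y) hxy
      apply H2 x y hx hy hxy 2 two_pos
      rw [hxny, neg_div, div_self hyne]
      norm_num
    have heqmul : ∀ x y : ℂ, ‖x‖ = r → ‖y‖ = r →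
        x * (starRingEnd ℂ) x = y * (starRingEnd ℂ) y := by
      intro x y hx hy
      rw [Complex.mul_conj, Complex.mul_conj]
      norm_cast
      rw [← Complex.sq_norm, ← Complex.sq_norm, hx, hy]
    have habsa : ‖a‖ = r := hrdef.symm
    have hkey : e * (a * (starRingEnd ℂ) a)^2 = η := by
      rcases hconj4 a ha habsa with hA|hA|hA|hA
      · exfalso
        rcases hconj4 b hb habsb with hB|hB|hB|hB
        · have hba : b = a := by rw [← hinvol b, hB, hA]
          exact hab hba.symm
        · exact htwo a b ha hb hab habsa habsb hA hB
        · have hBC : (starRingEnd ℂ) c = b := by rw [← hB, hinvol]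
          rcases hconj4 d hd' habsd with hD|hD|hD|hD
          · have h1 : d = a := by rw [← hinvol d, hD, hA]
            exact had h1.symm
          · have h1 : d = c := by rw [← hinvol d, hD, hB]
            exact hcd h1.symm
          · have h1 : d = b := by rw [← hinvol d, hD, hBC]
            exact hbd h1.symm
          · exact htwo a d ha hd' had habsa habsd hA hD
        · have hBD : (starRingEnd ℂ) d = b := by rw [← hB, hinvol]
          rcases hconj4 c hc habsc with hC|hC|hC|hC
          · have h1 : c = a := by rw [← hinvol c, hC, hA]
            exact hac h1.symm
          · have h1 : c = d := by rw [← hinvol c, hC, hB]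
            exact hcd h1
          · exact htwo a c ha hc hac habsa habsc hA hC
          · have h1 : c = b := by rw [← hinvol c, hC, hBD]
            exact hbc h1.symm
      · -- conj a = b
        have hBA : (starRingEnd ℂ) b = a := by rw [← hA, hinvol]
        rcases hconj4 c hc habsc with hC|hC|hC|hC
        · have h1 : c = b := by rw [← hinvol c, hC, hA]
          exact absurd h1.symm hbc
        · have h1 : c = a := by rw [← hinvol c, hC, hBA]
          exact absurd h1.symm hac
        · exfalso
          rcases hconj4 d hd' habsd with hD|hD|hD|hD
          · have h1 : d = b := by rw [← hinvol d, hD, hA]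
            exact hbd h1.symm
          · have h1 : d = a := by rw [← hinvol d, hD, hBA]
            exact had h1.symm
          · have h1 : d = c := by rw [← hinvol d, hD, hC]
            exact hcd h1.symm
          · exact htwo c d hc hd' hcd habsc habsd hC hD
        · -- conj c = d : pairs (a,b),(c,d)
          rw [hηdef, ← hA, ← hC]
          linear_combination (-(e * a * (starRingEnd ℂ) a)) * heqmul c a habsc habsa
      · -- conj a = c
        have hCA : (starRingEnd ℂ) c = a := by rw [← hA, hinvol]
        rcases hconj4 b hb habsb with hB|hB|hB|hB
        · have h1 : b = c := by rw [← hinvol b, hB, hA]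
          exact absurd h1 hbc
        · exfalso
          rcases hconj4 d hd' habsd with hD|hD|hD|hD
          · have h1 : d = c := by rw [← hinvol d, hD, hA]
            exact hcd h1.symm
          · have h1 : d = b := by rw [← hinvol d, hD, hB]
            exact hbd h1.symm
          · have h1 : d = a := by rw [← hinvol d, hD, hCA]
            exact had h1.symm
          · exact htwo b d hb hd' hbd habsb habsd hB hD
        · have h1 : b = a := by rw [← hinvol b, hB, hCA]
          exact absurd h1.symm hab
        · -- conj b = d : pairs (a,c),(b,d)
          rw [hηdef, ← hA, ← hB]
          linear_combination (-(e * a * (starRingEnd ℂ) a)) * heqmul b a habsb habsa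
      · -- conj a = d
        have hDA : (starRingEnd ℂ) d = a := by rw [← hA, hinvol]
        rcases hconj4 b hb habsb with hB|hB|hB|hB
        · have h1 : b = d := by rw [← hinvol b, hB, hA]
          exact absurd h1 hbd
        · exfalso
          rcases hconj4 c hc habsc with hC|hC|hC|hC
          · have h1 : c = d := by rw [← hinvol c, hC, hA]
            exact hcd h1
          · have h1 : c = b := by rw [← hinvol c, hC, hB]
            exact hbc h1.symm
          · exact htwo b c hb hc hbc habsb habsc hB hC
          · have h1 : c = a := by rw [← hinvol c, hC, hDA]
            exact hac h1.symm
        · -- conj b = c : pairs (a,d),(b,c)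
          rw [hηdef, ← hA, ← hB]
          linear_combination (-(e * a * (starRingEnd ℂ) a)) * heqmul b a habsb habsa
        · have h1 : b = a := by rw [← hinvol b, hB, hDA]
          exact absurd h1.symm hab
    -- minimal polynomial of e over ℤ is f itself
    have hfe : Polynomial.aeval e f = 0 := (hroot_iff e).mp he_root
    have hfa : Polynomial.aeval a f = 0 := (hroot_iff a).mp ha
    have hint_e : IsIntegral ℤ e := ⟨f, hm, by rwa [← Polynomial.aeval_def]⟩
    have hq_monic : (minpoly ℤ e).Monic := minpoly.monic hint_e
    have hq_dvd : minpoly ℤ e ∣ f := minpoly.isIntegrallyClosed_dvd hint_e hfe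
    set qC : Polynomial ℂ := (minpoly ℤ e).map (Int.castRingHom ℂ) with hqC
    have hqC_monic : qC.Monic := hq_monic.map _
    have hqC0 : qC ≠ 0 := hqC_monic.ne_zero
    have hqC_dvd : qC ∣ F := Polynomial.map_dvd _ hq_dvd
    have hq_roots_le : qC.roots ≤ F.roots := Polynomial.roots.le_of_dvd hF0 hqC_dvd
    have hqcard : Multiset.card qC.roots = qC.natDegree :=
      (Polynomial.splits_iff_card_roots).mp (IsAlgClosed.splits qC)
    have hq_root_iff : ∀ x : ℂ, qC.IsRoot x ↔ Polynomial.aeval x (minpoly ℤ e) = 0 := by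
      intro x
      rw [Polynomial.IsRoot, Polynomial.aeval_def, Polynomial.eval₂_eq_eval_map,
        algebraMap_int_eq, ← hqC]
    have he_qroot : e ∈ qC.roots := by
      rw [Polynomial.mem_roots hqC0, hq_root_iff]
      exact minpoly.aeval ℤ e
    have hdeg5 : (minpoly ℤ e).natDegree = 5 := by
      by_contra hne
      have hk_le : (minpoly ℤ e).natDegree ≤ 5 := by
        have h1 := Polynomial.natDegree_le_of_dvd hq_dvd hm.ne_zero
        rwa [hd] at h1
      have hqCdeg : qC.natDegree = (minpoly ℤ e).natDegree := hq_monic.natDegree_map _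
      have hsplit : qC.roots = e ::ₘ qC.roots.erase e := (Multiset.cons_erase he_qroot).symm
      have hqprodpoly := Polynomial.prod_multiset_X_sub_C_of_monic_of_roots_card_eq
        hqC_monic hqcard
      have h0 : ‖(qC.eval 0)‖ = ((qC.roots).map (‖·‖)).prod := by
        conv_lhs => rw [← hqprodpoly]
        rw [Polynomial.eval_multiset_prod, Multiset.map_map, aux_absprod, Multiset.map_map]
        congr 1
        apply Multiset.map_congr rfl
        intro x _
        simp
      have habs0 : ‖(qC.eval 0)‖ = |((minpoly ℤ e).coeff 0 : ℝ)| := by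
        rw [← Polynomial.coeff_zero_eq_eval_zero, hqC, Polynomial.coeff_map]
        push_cast
        exact Complex.norm_intCast _
      have hc0ne : (minpoly ℤ e).coeff 0 ≠ 0 := by
        intro hz
        have hroot0 : qC.IsRoot 0 := by
          rw [Polynomial.IsRoot, ← Polynomial.coeff_zero_eq_eval_zero, hqC,
            Polynomial.coeff_map, hz]
          simp
        have h0R : (0:ℂ) ∈ F.roots :=
          Multiset.mem_of_le hq_roots_le ((Polynomial.mem_roots hqC0).mpr hroot0)
        rcases hmem5 0 h0R with h|h|h|h|h
        · rw [← h] at habsa; simp at habsa; rw [← habsa] at hr_gt; linarith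
        · rw [← h] at habsb; simp at habsb; rw [← habsb] at hr_gt; linarith
        · rw [← h] at habsc; simp at habsc; rw [← habsc] at hr_gt; linarith
        · rw [← h] at habsd; simp at habsd; rw [← habsd] at hr_gt; linarith
        · rw [← h] at habse; simp at habse
          have : (0:ℝ) < 1 / r^4 := by positivity
          rw [← habse] at this; linarith
      have hone_le : (1:ℝ) ≤ ‖(qC.eval 0)‖ := by
        rw [habs0]
        exact_mod_cast Int.one_le_abs hc0ne
      have hcard_erase : Multiset.card (qC.roots.erase e) ≤ 3 := by
        have h1 : Multiset.card qC.roots ≤ 4 := by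
          rw [hqcard, hqCdeg]; omega
        have h2 : Multiset.card (qC.roots.erase e) = Multiset.card qC.roots - 1 := by
          rw [Multiset.card_erase_of_mem he_qroot, Nat.pred_eq_sub_one]
        omega
      have hboundrest : ((qC.roots.erase e).map (‖·‖)).prod ≤
          r ^ Multiset.card (qC.roots.erase e) := by
        apply aux_prodbound r hr0
        intro x hx
        have hxF : x ∈ F.roots := Multiset.mem_of_le hq_roots_le (Multiset.mem_of_mem_erase hx)
        exact hdoma x ((Polynomial.mem_roots hF0).mp hxF)
      have hpow : r ^ Multiset.card (qC.roots.erase e) ≤ r ^ 3 :=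
        pow_le_pow_right₀ hr1 hcard_erase
      have hlt : ‖(qC.eval 0)‖ < 1 := by
        calc ‖(qC.eval 0)‖ = (Multiset.map (‖·‖) qC.roots).prod := h0
          _ = ‖e‖ * ((qC.roots.erase e).map (‖·‖)).prod := by
              rw [hsplit]; simp
          _ ≤ ‖e‖ * r ^ 3 := by
              apply mul_le_mul_of_nonneg_left (le_trans hboundrest hpow)
                (norm_nonneg _)
          _ = (1 / r^4) * r^3 := by rw [habse]
          _ = 1 / r := by field_simp
          _ < 1 := by rw [div_lt_one hrpos]; exact hr_gt
      linarith
    have hqf : minpoly ℤ e = f := by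
      obtain ⟨u, hu⟩ := hq_dvd
      have hq0 : minpoly ℤ e ≠ 0 := hq_monic.ne_zero
      have hu0 : u ≠ 0 := by rintro rfl; rw [mul_zero] at hu; exact hm.ne_zero hu
      have hdegu : u.natDegree = 0 := by
        have hmul := Polynomial.natDegree_mul hq0 hu0
        rw [← hu, hd, hdeg5] at hmul; omega
      have hlead : (minpoly ℤ e).leadingCoeff * u.leadingCoeff = 1 := by
        have h1 := congrArg Polynomial.leadingCoeff hu
        rw [Polynomial.leadingCoeff_mul, hm.leadingCoeff] at h1
        exact h1.symm
      rw [hq_monic.leadingCoeff, one_mul] at hlead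
      have hu1 : u = 1 := by
        rw [Polynomial.eq_C_of_natDegree_eq_zero hdegu]
        rw [Polynomial.leadingCoeff, hdegu] at hlead
        rw [hlead]; rfl
      rw [hu1, mul_one] at hu
      exact hu.symm
    -- f is irreducible over ℚ
    have hQe : IsIntegral ℚ e := hint_e.tower_top
    have hminQ : minpoly ℚ e = f.map (Int.castRingHom ℚ) := by
      have h1 := minpoly.isIntegrallyClosed_eq_field_fractions ℚ ℂ hint_e
      simp only [Algebra.algebraMap_self, RingHom.id_apply] at h1
      rw [h1, hqf, algebraMap_int_eq]
    have hFQ_irr : Irreducible (f.map (Int.castRingHom ℚ)) := by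
      rw [← hminQ]; exact minpoly.irreducible hQe
    set FQ : Polynomial ℚ := f.map (Int.castRingHom ℚ) with hFQdef
    have hFQ_monic : FQ.Monic := hm.map _
    have hFQ0 : FQ ≠ 0 := hFQ_monic.ne_zero
    have hrootQ : ∀ x : ℂ, Polynomial.aeval x f = 0 → Polynomial.aeval x FQ = 0 := by
      intro x hx
      rw [hFQdef, ← algebraMap_int_eq, Polynomial.aeval_map_algebraMap]
      exact hx
    set E := IntermediateField.adjoin ℚ (FQ.rootSet ℂ) with hEdef
    haveI hsf : Polynomial.IsSplittingField ℚ E FQ :=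
      IntermediateField.adjoin_rootSet_isSplittingField (IsAlgClosed.splits (FQ.map (algebraMap ℚ ℂ)))
    haveI : Normal ℚ E := Normal.of_isSplittingField FQ
    have hmemE : ∀ x : ℂ, Polynomial.aeval x f = 0 → x ∈ E := fun x hx =>
      IntermediateField.subset_adjoin ℚ _ (Polynomial.mem_rootSet.mpr ⟨hFQ0, hrootQ x hx⟩)
    have hfca : Polynomial.aeval ((starRingEnd ℂ) a) f = 0 :=
      aux_hom_root (starRingEnd ℂ) f a hfa
    set A : E := ⟨a, hmemE a hfa⟩ with hAdef
    set CA : E := ⟨(starRingEnd ℂ) a, hmemE _ hfca⟩ with hCAdef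
    set Ee : E := ⟨e, hmemE e hfe⟩ with hEedef
    have hinjval : Function.Injective (E.val) := Subtype.coe_injective
    have hmin1 : minpoly ℚ A = minpoly ℚ Ee := by
      have h1 : minpoly ℚ (E.val A) = minpoly ℚ A := minpoly.algHom_eq E.val hinjval A
      have h2 : minpoly ℚ (E.val Ee) = minpoly ℚ Ee := minpoly.algHom_eq E.val hinjval Ee
      have h3 : minpoly ℚ a = FQ :=
        (minpoly.eq_of_irreducible_of_monic hFQ_irr (hrootQ a hfa) hFQ_monic).symm
      rw [← h1, ← h2]
      show minpoly ℚ a = minpoly ℚ e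
      rw [h3, hminQ]
    obtain ⟨σ, hσ⟩ := Normal.minpoly_eq_iff_mem_orbit E |>.mp hmin1
    set ψ : ↥E →ₐ[ℚ] ℂ := E.val.comp σ.toAlgHom with hψdef
    have hψe : ψ Ee = a := by
      have hσ' : σ Ee = A := hσ
      show E.val (σ Ee) = a
      rw [hσ']
      rfl
    have hψroot : ∀ (x : ↥E), Polynomial.aeval (x:ℂ) f = 0 → Polynomial.aeval (ψ x) f = 0 := by
      intro x hx
      have hxE : Polynomial.aeval x f = 0 :=
        aux_root_down (algebraMap E ℂ) (algebraMap (↥E) ℂ).injective f x hx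
      exact aux_hom_root ψ.toRingHom f x hxE
    have habs_opts : ∀ x : ↥E, Polynomial.aeval (x:ℂ) f = 0 →
        ‖(ψ x)‖ = r ∨ ‖(ψ x)‖ = 1 / r ^ 4 := by
      intro x hx
      have hroot' : F.IsRoot (ψ x) := (hroot_iff _).mpr (hψroot x hx)
      rcases hmem5 _ (hmemR _ hroot') with h|h|h|h|h
      · left; rw [h]
      · left; rw [h]; exact habsb
      · left; rw [h]; exact habsc
      · left; rw [h]; exact habsd
      · right; rw [h]; exact habse
    have hcoe : ((Ee * (A * CA)^2 : ↥E) : ℂ) = e * (a * (starRingEnd ℂ) a)^2 := by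
      push_cast
      rfl
    have hteq : ‖ψ (Ee * (A * CA)^2)‖ = 1 := by
      rcases hη with h | h
      · have h1 : Ee * (A * CA)^2 = 1 := by
          apply Subtype.coe_injective
          show ((Ee * (A * CA)^2 : ↥E) : ℂ) = ((1 : ↥E) : ℂ)
          rw [hcoe, hkey, h]
          simp
        rw [h1]
        simp
      · have h1 : Ee * (A * CA)^2 = -1 := by
          apply Subtype.coe_injective
          show ((Ee * (A * CA)^2 : ↥E) : ℂ) = ((-1 : ↥E) : ℂ)
          rw [hcoe, hkey, h]
          simp
        rw [h1]
        simp
    have hfinal : r * (‖(ψ A)‖ * ‖(ψ CA)‖)^2 = 1 := by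
      have hexp : ψ (Ee * (A * CA)^2) = a * (ψ A * ψ CA)^2 := by
        rw [map_mul, map_pow, map_mul, hψe]
      rw [hexp, norm_mul, norm_pow, norm_mul, habsa] at hteq
      exact hteq
    have hAcoe : ((A : ↥E) : ℂ) = a := rfl
    have hCAcoe : ((CA : ↥E) : ℂ) = (starRingEnd ℂ) a := rfl
    have hoptA := habs_opts A (by rw [hAcoe]; exact hfa)
    have hoptCA := habs_opts CA (by rw [hCAcoe]; exact hfca)
    exact aux_num r hr_gt _ _ hoptA hoptCA hfinal
end

section
/- Let f ∈ ℤ[x] be a monic polynomial of degree 5 with constant coefficient ±1 having exactly four distinct roots of maximal modulus R > 1 (forming two complex-conjugate pairs α, ᾱ, β, β̄) and one further root ρ with |ρ| < R. Then f is irreducible over ℚ. -/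
open Polynomial

/-- A monic quintic in ℤ[x] with constant coefficient ±1, four simple dominant roots
(two complex-conjugate pairs) on a circle of radius R > 1 and a fifth root of smaller
modulus is irreducible over ℚ. -/
theorem quintic_irreducible (f : Polynomial ℤ) (hmonic : f.Monic) (hdeg : f.natDegree = 5)
    (hconst : f.coeff 0 = 1 ∨ f.coeff 0 = -1)
    (R : ℝ) (hR : 1 < R) (α β ρ : ℂ)
    (hfac : f.map (Int.castRingHom ℂ) =
      (X - C α) * (X - C (starRingEnd ℂ α)) * (X - C β) * (X - C (starRingEnd ℂ β)) * (X - C ρ))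
    (hdist : α ≠ starRingEnd ℂ α ∧ α ≠ β ∧ α ≠ starRingEnd ℂ β ∧
      starRingEnd ℂ α ≠ β ∧ starRingEnd ℂ α ≠ starRingEnd ℂ β ∧ β ≠ starRingEnd ℂ β)
    (hα : ‖α‖ = R) (hβ : ‖β‖ = R) (hρ : ‖ρ‖ < R) :
    Irreducible (f.map (Int.castRingHom ℚ)) := by
  have hf0 : f ≠ 0 := hmonic.ne_zero
  have hRpos : (0:ℝ) < R := lt_trans one_pos hR
  set M : Multiset ℂ := {α, starRingEnd ℂ α, β, starRingEnd ℂ β, ρ} with hMdef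
  have hfC0 : f.map (Int.castRingHom ℂ) ≠ 0 := by
    have hinj : Function.Injective (Int.castRingHom ℂ) := fun a b h => by
      simpa using h
    exact (Polynomial.map_ne_zero_iff hinj).mpr hf0
  have hMfac : f.map (Int.castRingHom ℂ) = (M.map fun a => X - C a).prod := by
    rw [hfac]
    simp only [hMdef, Multiset.insert_eq_cons, Multiset.map_cons, Multiset.map_singleton,
      Multiset.prod_cons, Multiset.prod_singleton]
    ring
  have hroots : (f.map (Int.castRingHom ℂ)).roots = M := by
    rw [hMfac, Polynomial.roots_multiset_prod_X_sub_C]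
  -- the absolute value of the fifth root
  have habsf0 : ‖((f.coeff 0 : ℂ))‖ = 1 := by
    rcases hconst with h | h <;> rw [h] <;> simp
  have hcoeff0 : ((f.coeff 0 : ℂ)) =
      (0-α) * (0-(starRingEnd ℂ α)) * (0-β) * (0-(starRingEnd ℂ β)) * (0-ρ) := by
    have h1 : (f.map (Int.castRingHom ℂ)).coeff 0 = ((f.coeff 0 : ℂ)) := by
      simp [Polynomial.coeff_map]
    rw [← h1, coeff_zero_eq_eval_zero, hfac]
    simp
  have hρR : R ^ 4 * ‖ρ‖ = 1 := by
    have h2 := habsf0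
    rw [hcoeff0] at h2
    simp only [zero_sub, norm_mul, norm_neg, Complex.norm_conj, hα, hβ] at h2
    nlinarith [h2]
  have hρpos : 0 < ‖ρ‖ := by
    rcases lt_or_eq_of_le (norm_nonneg ρ) with h | h
    · exact h
    · exfalso; rw [← h] at hρR; simp at hρR
  -- key: any monic divisor has degree 0 or 5
  have key : ∀ g : Polynomial ℤ, g.Monic → g ∣ f → g.natDegree = 0 ∨ g.natDegree = 5 := by
    intro g hg hdvd
    by_contra hcon
    push_neg at hcon
    obtain ⟨hd0, hd5⟩ := hcon
    have hdle : g.natDegree ≤ 5 := hdeg ▸ Polynomial.natDegree_le_of_dvd hdvd hf0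
    set d := g.natDegree with hd
    have hd4 : d ≤ 4 := by omega
    have hd1 : 1 ≤ d := by omega
    set gC := g.map (Int.castRingHom ℂ) with hgC
    have hgCm : gC.Monic := hg.map _
    have hgCd : gC ∣ f.map (Int.castRingHom ℂ) := Polynomial.map_dvd _ hdvd
    set T := gC.roots with hT
    have hTle : T ≤ M := hroots ▸ Polynomial.roots.le_of_dvd hfC0 hgCd
    have hsplit : Splits gC := IsAlgClosed.splits gC
    have hcard : Multiset.card T = d := by
      rw [hT, Polynomial.splits_iff_card_roots.mp hsplit, hgC]
      exact hg.natDegree_map _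
    have hgprod : gC = (T.map fun a => X - C a).prod :=
      hsplit.eq_prod_roots_of_monic hgCm
    -- constant coefficient of g is a unit
    obtain ⟨k, hk⟩ := hdvd
    have hg0 : g.coeff 0 = 1 ∨ g.coeff 0 = -1 := by
      have hdvd0 : g.coeff 0 ∣ f.coeff 0 := ⟨k.coeff 0, by rw [hk, Polynomial.mul_coeff_zero]⟩
      have hu : IsUnit (g.coeff 0) := by
        rcases hconst with h | h <;> rw [h] at hdvd0
        · exact isUnit_of_dvd_one hdvd0
        · exact isUnit_of_dvd_unit hdvd0 (by simp)
      exact Int.isUnit_iff.mp hu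
    have habsg0 : ‖((g.coeff 0 : ℂ))‖ = 1 := by
      rcases hg0 with h | h <;> rw [h] <;> simp
    -- product of absolute values of roots of g is 1
    have hprodT : (T.map (fun x => ‖x‖)).prod = 1 := by
      have h1 : ((g.coeff 0 : ℂ)) = (T.map fun a => (0:ℂ) - a).prod := by
        have h2 : gC.coeff 0 = ((g.coeff 0 : ℂ)) := by simp [hgC, Polynomial.coeff_map]
        rw [← h2, coeff_zero_eq_eval_zero, hgprod, Polynomial.eval_multiset_prod,
          Multiset.map_map]
        simp
      have h3 : ‖((g.coeff 0 : ℂ))‖ = (T.map (fun x => ‖x‖)).prod := by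
        rw [h1, show ‖(Multiset.map (fun a => (0:ℂ) - a) T).prod‖ = normHom (Multiset.map (fun a => (0:ℂ) - a) T).prod from rfl, ← Multiset.prod_hom _ (normHom (α := ℂ)), Multiset.map_map]
        congr 1
        apply Multiset.map_congr rfl
        intro x _
        simp
      rw [← h3, habsg0]
    -- counting
    classical
    set b := T.count ρ with hb
    have hble : b ≤ 1 := by
      have h4 := Multiset.count_le_of_le ρ hTle
      have hρα : ρ ≠ α := fun h => by rw [h, hα] at hρ; exact lt_irrefl _ hρ
      have hρα' : ρ ≠ starRingEnd ℂ α := fun h => by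
        rw [h, Complex.norm_conj, hα] at hρ; exact lt_irrefl _ hρ
      have hρβ : ρ ≠ β := fun h => by rw [h, hβ] at hρ; exact lt_irrefl _ hρ
      have hρβ' : ρ ≠ starRingEnd ℂ β := fun h => by
        rw [h, Complex.norm_conj, hβ] at hρ; exact lt_irrefl _ hρ
      have hMρ : M.count ρ = 1 := by
        simp [hMdef, Multiset.insert_eq_cons, Multiset.count_cons, hρα, hρα', hρβ, hρβ']
      omega
    have hmemM : ∀ x ∈ T, x = α ∨ x = starRingEnd ℂ α ∨ x = β ∨ x = starRingEnd ℂ β ∨ x = ρ := by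
      intro x hx
      have := Multiset.mem_of_le hTle hx
      simpa [hMdef, Multiset.insert_eq_cons] using this
    have hsplitT : T = T.filter (· = ρ) + T.filter (fun x => ¬ x = ρ) :=
      (Multiset.filter_add_not _ _).symm
    have hfilter_eq : T.filter (· = ρ) = Multiset.replicate b ρ := Multiset.filter_eq' T ρ
    have hcard2 : Multiset.card (T.filter (fun x => ¬ x = ρ)) = d - b := by
      have h5 := congrArg Multiset.card hsplitT
      rw [Multiset.card_add, hfilter_eq, Multiset.card_replicate, hcard] at h5
      omega
    have habs_other : ∀ x ∈ T.filter (fun x => ¬ x = ρ), ‖x‖ = R := by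
      intro x hx
      rw [Multiset.mem_filter] at hx
      rcases hmemM x hx.1 with h | h | h | h | h
      · rw [h, hα]
      · rw [h, Complex.norm_conj, hα]
      · rw [h, hβ]
      · rw [h, Complex.norm_conj, hβ]
      · exact absurd h hx.2
    have hprod_split : (T.map (fun x => ‖x‖)).prod = ‖ρ‖ ^ b * R ^ (d - b) := by
      conv_lhs => rw [hsplitT]
      rw [Multiset.map_add, Multiset.prod_add]
      congr 1
      · rw [hfilter_eq, Multiset.map_replicate, Multiset.prod_replicate]
      · have h6 : (T.filter (fun x => ¬ x = ρ)).map (fun x => ‖x‖) =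
            Multiset.replicate (d - b) R := by
          rw [Multiset.eq_replicate]
          constructor
          · rw [Multiset.card_map, hcard2]
          · intro y hy
            obtain ⟨x, hx, hxy⟩ := Multiset.mem_map.mp hy
            rw [← hxy]; exact habs_other x hx
        rw [h6, Multiset.prod_replicate]
    rw [hprodT] at hprod_split
    -- derive contradiction
    interval_cases b
    · simp only [pow_zero, one_mul, Nat.sub_zero] at hprod_split
      have : (1:ℝ) < R ^ d := one_lt_pow₀ hR (by omega)
      rw [← hprod_split] at this
      exact lt_irrefl _ this
    · simp only [pow_one] at hprod_split
      have hlt : R ^ (d - 1) < R ^ 4 := by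
        apply pow_lt_pow_right₀ hR
        omega
      have : ‖ρ‖ * R ^ (d-1) < ‖ρ‖ * R ^ 4 := by
        exact mul_lt_mul_of_pos_left hlt hρpos
      rw [mul_comm (‖ρ‖) (R ^ (d-1))] at hprod_split
      nlinarith [hρR]
  -- irreducibility over ℤ
  have main : ∀ a b : Polynomial ℤ, a.Monic → b.Monic → f = a * b → IsUnit a ∨ IsUnit b := by
    intro a b ha hb hab
    have hdvda : a ∣ f := Dvd.intro b hab.symm
    have hsum : a.natDegree + b.natDegree = 5 := by
      rw [← ha.natDegree_mul hb, ← hab, hdeg]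
    rcases key a ha hdvda with h | h
    · left
      rw [ha.natDegree_eq_zero.mp h]
      exact isUnit_one
    · right
      have hb0 : b.natDegree = 0 := by omega
      rw [hb.natDegree_eq_zero.mp hb0]
      exact isUnit_one
  have hirrZ : Irreducible f := by
    constructor
    · intro hu
      have := Polynomial.natDegree_eq_zero_of_isUnit hu
      omega
    · intro a b hab
      have hlc : a.leadingCoeff * b.leadingCoeff = 1 := by
        have h7 : f.leadingCoeff = 1 := hmonic
        rw [hab, Polynomial.leadingCoeff_mul] at h7
        exact h7
      rcases Int.mul_eq_one_iff_eq_one_or_neg_one.mp hlc with ⟨h1, h2⟩ | ⟨h1, h2⟩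
      · exact main a b h1 h2 hab
      · have ha' : (-a).Monic := by
          rw [Polynomial.Monic, Polynomial.leadingCoeff_neg, h1]; ring
        have hb' : (-b).Monic := by
          rw [Polynomial.Monic, Polynomial.leadingCoeff_neg, h2]; ring
        rcases main (-a) (-b) ha' hb' (by rw [neg_mul_neg]; exact hab) with h | h
        · exact Or.inl ((IsUnit.neg_iff a).mp h)
        · exact Or.inr ((IsUnit.neg_iff b).mp h)
  have heq : Int.castRingHom ℚ = algebraMap ℤ ℚ := by
    ext n
    simp
  rw [heq]
  exact (hmonic.irreducible_iff_irreducible_map_fraction_map).mp hirrZ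
end

section
/- Let f ∈ ℚ[x] be an irreducible monic quintic with four distinct roots α, ᾱ, β, β̄ all of modulus R and a fifth root ρ with |ρ| < R. Suppose σ is a field automorphism of the splitting field of f with σ(α) = ρ. Then σ cannot map both β and β̄ into the set {α, ᾱ, β, β̄} of dominant roots. -/
open Polynomial

/-- For an irreducible monic quintic over ℚ with four dominant roots α, ᾱ, β, β̄ of modulus R
and a fifth root ρ with |ρ| < R, an automorphism σ of the splitting field (inside ℂ) sending
α to ρ cannot map both β and β̄ into the set of dominant roots. -/
theorem sigma_not_both_dominant (f : Polynomial ℚ) (hirr : Irreducible f) (hmonic : f.Monic)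
    (hdeg : f.natDegree = 5) (R : ℝ) (α β ρ : ℂ)
    (hαroot : α ∈ f.rootSet ℂ) (hαcroot : starRingEnd ℂ α ∈ f.rootSet ℂ)
    (hβroot : β ∈ f.rootSet ℂ) (hβcroot : starRingEnd ℂ β ∈ f.rootSet ℂ)
    (hρroot : ρ ∈ f.rootSet ℂ)
    (hdist : α ≠ starRingEnd ℂ α ∧ α ≠ β ∧ α ≠ starRingEnd ℂ β ∧
      starRingEnd ℂ α ≠ β ∧ starRingEnd ℂ α ≠ starRingEnd ℂ β ∧ β ≠ starRingEnd ℂ β)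
    (hα : ‖α‖ = R) (hβ : ‖β‖ = R) (hρ : ‖ρ‖ < R)
    (hαK : α ∈ IntermediateField.adjoin ℚ (f.rootSet ℂ))
    (hβK : β ∈ IntermediateField.adjoin ℚ (f.rootSet ℂ))
    (hβcK : starRingEnd ℂ β ∈ IntermediateField.adjoin ℚ (f.rootSet ℂ))
    (σ : (IntermediateField.adjoin ℚ (f.rootSet ℂ)) ≃ₐ[ℚ]
      (IntermediateField.adjoin ℚ (f.rootSet ℂ)))
    (hσα : (σ ⟨α, hαK⟩ : ℂ) = ρ) :
    ¬ ((σ ⟨β, hβK⟩ : ℂ) ∈ ({α, starRingEnd ℂ α, β, starRingEnd ℂ β} : Set ℂ) ∧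
       (σ ⟨starRingEnd ℂ β, hβcK⟩ : ℂ) ∈ ({α, starRingEnd ℂ α, β, starRingEnd ℂ β} : Set ℂ)) := by
  rintro ⟨hb, hbc⟩
  obtain ⟨h1, h2, h3, h4, h5, h6⟩ := hdist
  have hf0 : f ≠ 0 := hmonic.ne_zero
  have hRpos : 0 < R := lt_of_le_of_lt (norm_nonneg ρ) hρ
  have hαc : ‖starRingEnd ℂ α‖ = R := by rw [Complex.norm_conj]; exact hα
  have hβc : ‖starRingEnd ℂ β‖ = R := by rw [Complex.norm_conj]; exact hβ
  -- abs of dominant roots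
  have habsdom : ∀ x ∈ ({α, starRingEnd ℂ α, β, starRingEnd ℂ β} : Set ℂ),
      ‖x‖ = R := by
    rintro x (rfl | rfl | rfl | rfl) <;> assumption
  -- ρ distinct from dominant roots
  have hρne : ∀ x ∈ ({α, starRingEnd ℂ α, β, starRingEnd ℂ β} : Set ℂ), ρ ≠ x := by
    intro x hx h
    rw [h, habsdom x hx] at hρ; exact lt_irrefl _ hρ
  -- root set is exactly the five roots
  have hsep : f.Separable := hirr.separable
  have hsplit : Splits (f.map (algebraMap ℚ ℂ)) := IsAlgClosed.splits _
  have hcard : (f.rootSet ℂ).ncard = 5 := by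
    rw [Set.ncard_eq_toFinset_card']
    rw [Set.toFinset_card]
    rw [Polynomial.card_rootSet_eq_natDegree hsep hsplit, hdeg]
  have hpρα : ρ ≠ α := hρne α (by simp)
  have hpραc : ρ ≠ starRingEnd ℂ α := hρne _ (by simp)
  have hpρβ : ρ ≠ β := hρne β (by simp)
  have hpρβc : ρ ≠ starRingEnd ℂ β := hρne _ (by simp)
  have hSsub : ({α, starRingEnd ℂ α, β, starRingEnd ℂ β, ρ} : Set ℂ) ⊆ f.rootSet ℂ := by
    rintro x (rfl | rfl | rfl | rfl | rfl) <;> assumption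
  have hScard : ({α, starRingEnd ℂ α, β, starRingEnd ℂ β, ρ} : Set ℂ).ncard = 5 := by
    rw [Set.ncard_insert_of_notMem (by simp [h1, h2, h3, hpρα.symm]) (Set.toFinite _),
        Set.ncard_insert_of_notMem (by simp [h4, h5, hpραc.symm]) (Set.toFinite _),
        Set.ncard_insert_of_notMem (by simp [h6, hpρβ.symm]) (Set.toFinite _),
        Set.ncard_insert_of_notMem (by simp [hpρβc.symm]) (Set.toFinite _),
        Set.ncard_singleton]
  have hSet : ({α, starRingEnd ℂ α, β, starRingEnd ℂ β, ρ} : Set ℂ) = f.rootSet ℂ :=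
    Set.eq_of_subset_of_ncard_le hSsub (by rw [hcard, hScard]) (Set.toFinite _)
  have hbound : ∀ x ∈ f.rootSet ℂ, ‖x‖ ≤ R := by
    rw [← hSet]
    rintro x (rfl | rfl | rfl | rfl | rfl)
    · exact le_of_eq hα
    · exact le_of_eq hαc
    · exact le_of_eq hβ
    · exact le_of_eq hβc
    · exact le_of_lt hρ
  -- σ maps roots to roots
  have key : ∀ (x : IntermediateField.adjoin ℚ (f.rootSet ℂ)), (x : ℂ) ∈ f.rootSet ℂ → ((σ x : ℂ)) ∈ f.rootSet ℂ := by
    intro x hx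
    rw [Polynomial.mem_rootSet] at hx ⊢
    refine ⟨hf0, ?_⟩
    have hx2 := hx.2
    rw [show ((x : ℂ)) = algebraMap (IntermediateField.adjoin ℚ (f.rootSet ℂ)) ℂ x from rfl,
      Polynomial.aeval_algebraMap_apply] at hx2
    have hx3 : (Polynomial.aeval x) f = 0 :=
      (algebraMap (IntermediateField.adjoin ℚ (f.rootSet ℂ)) ℂ).injective (by simpa using hx2)
    have : (Polynomial.aeval (σ x)) f = σ ((Polynomial.aeval x) f) :=
      Polynomial.aeval_algHom_apply σ.toAlgHom x f
    rw [show ((σ x : IntermediateField.adjoin ℚ (f.rootSet ℂ)) : ℂ) = algebraMap (IntermediateField.adjoin ℚ (f.rootSet ℂ)) ℂ (σ x) from rfl,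
      Polynomial.aeval_algebraMap_apply, this, hx3]
    simp
  -- conj α in K
  have hαcK : starRingEnd ℂ α ∈ IntermediateField.adjoin ℚ (f.rootSet ℂ) := IntermediateField.subset_adjoin ℚ _ hαcroot
  -- αᾱ = ββ̄ in K
  have hmulK : (⟨α, hαK⟩ * ⟨starRingEnd ℂ α, hαcK⟩ : IntermediateField.adjoin ℚ (f.rootSet ℂ))
      = ⟨β, hβK⟩ * ⟨starRingEnd ℂ β, hβcK⟩ := by
    apply Subtype.ext
    push_cast
    rw [Complex.mul_conj, Complex.mul_conj]
    norm_cast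
    rw [← Complex.sq_norm, ← Complex.sq_norm, hα, hβ]
  have hσmul := congrArg σ hmulK
  rw [map_mul, map_mul] at hσmul
  have hσmulC : (ρ : ℂ) * ((σ ⟨starRingEnd ℂ α, hαcK⟩ : IntermediateField.adjoin ℚ (f.rootSet ℂ)) : ℂ)
      = ((σ ⟨β, hβK⟩ : IntermediateField.adjoin ℚ (f.rootSet ℂ)) : ℂ) * ((σ ⟨starRingEnd ℂ β, hβcK⟩ : IntermediateField.adjoin ℚ (f.rootSet ℂ)) : ℂ) := by
    rw [← hσα]
    exact_mod_cast congrArg (fun x : IntermediateField.adjoin ℚ (f.rootSet ℂ) => (x : ℂ)) hσmul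
  have hcle : ‖((σ ⟨starRingEnd ℂ α, hαcK⟩ : IntermediateField.adjoin ℚ (f.rootSet ℂ)) : ℂ)‖ ≤ R :=
    hbound _ (key _ hαcroot)
  have hlhs : ‖(ρ : ℂ) * ((σ ⟨starRingEnd ℂ α, hαcK⟩ : IntermediateField.adjoin ℚ (f.rootSet ℂ)) : ℂ)‖ < R * R := by
    rw [norm_mul]
    calc ‖ρ‖ * ‖((σ ⟨starRingEnd ℂ α, hαcK⟩ : IntermediateField.adjoin ℚ (f.rootSet ℂ)) : ℂ)‖
        ≤ ‖ρ‖ * R := by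
          exact mul_le_mul_of_nonneg_left hcle (norm_nonneg ρ)
      _ < R * R := by exact mul_lt_mul_of_pos_right hρ hRpos
  rw [hσmulC, norm_mul, habsdom _ hb, habsdom _ hbc] at hlhs
  exact lt_irrefl _ hlhs
end

section
/- Let α be an algebraic number with Galois conjugates β and γ (roots of the minimal polynomial of α) satisfying α² = βγ with β ≠ α. Then α/β is a root of unity. -/
open Polynomial

open Finset in
lemma keyA {ι R : Type*} [CommRing R] [LinearOrder R] [IsStrictOrderedRing R] [DecidableEq ι]
    (f : ι → R) (e₁ e₂ : Equiv.Perm ι) (S : Finset ι)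
    (h1 : ∀ i, f i ≠ 0 → i ∈ S)
    (h2 : ∀ i, f (e₁ i) ≠ 0 → i ∈ S)
    (h3 : ∀ i, f (e₂ i) ≠ 0 → i ∈ S)
    (hrel : ∀ i, 2 * f i = f (e₁ i) + f (e₂ i)) :
    ∀ i, f (e₁ i) = f i := by
  have key : ∀ e : Equiv.Perm ι, (∀ i, f (e i) ≠ 0 → i ∈ S) →
      ∑ i ∈ S, f (e i) ^ 2 = ∑ i ∈ S, f i ^ 2 := by
    intro e he
    have himg : ∑ j ∈ S.image ⇑e, f j ^ 2 = ∑ i ∈ S, f (e i) ^ 2 :=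
      Finset.sum_image (fun a _ b _ h => e.injective h)
    rw [← himg]
    have hsub1 : ∑ j ∈ S.image ⇑e, f j ^ 2 = ∑ j ∈ S ∪ S.image ⇑e, f j ^ 2 := by
      refine Finset.sum_subset Finset.subset_union_right fun j hj hnj => ?_
      by_contra hne
      have hfj : f j ≠ 0 := fun h => hne (by rw [h]; ring)
      have : e.symm j ∈ S := he (e.symm j) (by rwa [Equiv.apply_symm_apply])
      exact hnj (Finset.mem_image.mpr ⟨e.symm j, this, Equiv.apply_symm_apply e j⟩)
    have hsub2 : ∑ j ∈ S, f j ^ 2 = ∑ j ∈ S ∪ S.image ⇑e, f j ^ 2 := by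
      refine Finset.sum_subset Finset.subset_union_left fun j hj hnj => ?_
      by_contra hne
      have hfj : f j ≠ 0 := fun h => hne (by rw [h]; ring)
      exact hnj (h1 j hfj)
    rw [hsub1, hsub2]
  have hzero : ∑ i ∈ S, ((f (e₁ i) - f i) ^ 2 + (f (e₂ i) - f i) ^ 2) = 0 := by
    have expand : ∀ i, (f (e₁ i) - f i) ^ 2 + (f (e₂ i) - f i) ^ 2
        = f (e₁ i) ^ 2 + f (e₂ i) ^ 2 - 2 * f i ^ 2 + 2 * ((2 * f i - (f (e₁ i) + f (e₂ i))) * f i) := by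
      intro i; ring
    rw [Finset.sum_congr rfl fun i _ => expand i]
    have : ∀ i ∈ S, (2 * f i - (f (e₁ i) + f (e₂ i))) * f i = 0 := by
      intro i _; rw [hrel i]; ring
    rw [Finset.sum_congr rfl fun i hi => by rw [this i hi]]
    simp only [mul_zero, add_zero]
    rw [Finset.sum_sub_distrib, Finset.sum_add_distrib, key e₁ h2, key e₂ h3, ← Finset.mul_sum]
    ring
  intro i
  by_cases hi : i ∈ S
  · have hterm : (f (e₁ i) - f i) ^ 2 + (f (e₂ i) - f i) ^ 2 = 0 := by
      have hnonneg : ∀ j ∈ S, 0 ≤ (f (e₁ j) - f j) ^ 2 + (f (e₂ j) - f j) ^ 2 :=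
        fun j _ => add_nonneg (sq_nonneg _) (sq_nonneg _)
      exact (Finset.sum_eq_zero_iff_of_nonneg hnonneg).mp hzero i hi
    have h1' : (f (e₁ i) - f i) ^ 2 = 0 :=
      le_antisymm (by nlinarith [sq_nonneg (f (e₂ i) - f i)]) (sq_nonneg _)
    have := pow_eq_zero_iff (n := 2) (by norm_num) |>.mp h1'
    linarith [sub_eq_zero.mp this]
  · have hfi : f i = 0 := by by_contra h; exact hi (h1 i h)
    have hfe : f (e₁ i) = 0 := by by_contra h; exact hi (h2 i h)
    rw [hfi, hfe]

open UniqueFactorizationMonoid in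
lemma nf_ideal_map {R S : Type*} [CommRing R] [CommRing S]
    [IsDedekindDomain R] [IsDedekindDomain S] (Φ : R ≃+* S) (I : Ideal R) (hI : I ≠ ⊥) :
    normalizedFactors (Ideal.map (Φ : R →+* S) I)
      = (normalizedFactors I).map (Ideal.map (Φ : R →+* S)) := by
  classical
  set g : Ideal R → Ideal S := Ideal.map (Φ : R →+* S) with hg
  let ME : Ideal R ≃* Ideal S :=
    { toFun := g
      invFun := Ideal.map (Φ.symm : S →+* R)
      left_inv := fun J => Ideal.map_of_equiv (I := J) Φ
      right_inv := fun J => by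
        have := Ideal.map_of_equiv (I := J) Φ.symm
        simpa using this
      map_mul' := fun J₁ J₂ => Ideal.map_mul _ J₁ J₂ }
  have hMEg : ∀ J, ME J = g J := fun J => rfl
  have hginj : Function.Injective g := fun J₁ J₂ h => by
    have := congrArg ME.symm (show ME J₁ = ME J₂ from h)
    simpa using this
  have hgI0 : g I ≠ ⊥ := by
    intro h
    apply hI
    have := congrArg (Ideal.map (Φ.symm : S →+* R)) h
    rw [show Ideal.map (Φ.symm : S →+* R) (g I) = I from Ideal.map_of_equiv (I := I) Φ] at this
    simpa using this
  have hprod1 : (normalizedFactors I).prod = I := associated_iff_eq.mp (prod_normalizedFactors hI)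
  have hprod2 : (normalizedFactors (g I)).prod = g I :=
    associated_iff_eq.mp (prod_normalizedFactors hgI0)
  have hmapprod : ((normalizedFactors I).map g).prod = g I := by
    have := Multiset.prod_hom (normalizedFactors I) (Ideal.mapHom (Φ : R →+* S))
    calc ((normalizedFactors I).map g).prod
        = (Ideal.mapHom (Φ : R →+* S)) (normalizedFactors I).prod := this
      _ = g I := by rw [hprod1]; rfl
  symm
  refine Multiset.rel_eq.mp ?_
  have hrel := UniqueFactorizationMonoid.factors_unique (f := (normalizedFactors I).map g)
      (g := normalizedFactors (g I)) ?_ ?_ ?_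
  · exact Multiset.Rel.mono hrel fun a _ b _ h => associated_iff_eq.mp h
  · intro x hx
    obtain ⟨Q, hQ, rfl⟩ := Multiset.mem_map.mp hx
    have hpr : Prime (ME Q) := (MulEquiv.prime_iff ME).mpr (prime_of_normalized_factor Q hQ)
    rw [hMEg] at hpr
    exact hpr.irreducible
  · exact fun x hx => irreducible_of_normalized_factor x hx
  · rw [hmapprod, hprod2]; exact Associated.refl _

set_option maxHeartbeats 3200000 in
open Polynomial IntermediateField NumberField in
/-- If an algebraic number α has Galois conjugates β and γ with α² = βγ and β ≠ α,
then α/β is a root of unity. -/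
theorem conjugate_square_ratio (α β γ : ℂ) (halg : IsAlgebraic ℚ α)
    (hβ : ((minpoly ℚ α).map (Rat.castHom ℂ)).IsRoot β)
    (hγ : ((minpoly ℚ α).map (Rat.castHom ℂ)).IsRoot γ)
    (hrel : α ^ 2 = β * γ) (hne : β ≠ α) :
    ∃ n : ℕ, 0 < n ∧ (α / β) ^ n = 1 := by
  classical
  have hcast : (Rat.castHom ℂ) = algebraMap ℚ ℂ := Subsingleton.elim _ _
  have hα0 : α ≠ 0 := by
    rintro rfl
    apply hne
    have h0 : minpoly ℚ (0:ℂ) = X := minpoly.zero ℚ ℂ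
    rw [h0] at hβ
    simpa using hβ
  have hint : IsIntegral ℚ α := halg.isIntegral
  set p := minpoly ℚ α with hpdef
  have hp0 : p ≠ 0 := minpoly.ne_zero hint
  have haevβ : aeval β p = 0 := by
    rw [aeval_def, ← eval_map, ← hcast]; exact hβ
  have haevγ : aeval γ p = 0 := by
    rw [aeval_def, ← eval_map, ← hcast]; exact hγ
  have haevα : aeval α p = 0 := minpoly.aeval ℚ α
  have hβ0 : β ≠ 0 := by
    intro h
    apply hα0
    have := hrel
    rw [h, zero_mul] at this
    exact pow_eq_zero_iff (n := 2) (by norm_num) |>.mp this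
  -- the splitting field K inside ℂ
  have hsplits : (p.map (algebraMap ℚ ℂ)).Splits := IsAlgClosed.splits _
  set Kf := IntermediateField.adjoin ℚ (p.rootSet ℂ) with hKfdef
  haveI hSF : p.IsSplittingField ℚ Kf :=
    IntermediateField.adjoin_rootSet_isSplittingField hsplits
  haveI : FiniteDimensional ℚ Kf := Polynomial.IsSplittingField.finiteDimensional Kf p
  haveI : Normal ℚ Kf := Normal.of_isSplittingField p
  haveI : NumberField Kf := ⟨⟩
  have hmem : ∀ x : ℂ, aeval x p = 0 → x ∈ Kf := fun x hx =>
    subset_adjoin ℚ _ ((Polynomial.mem_rootSet).mpr ⟨hp0, hx⟩)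
  set a : Kf := ⟨α, hmem α haevα⟩ with hadef
  set b : Kf := ⟨β, hmem β haevβ⟩ with hbdef
  set c : Kf := ⟨γ, hmem γ haevγ⟩ with hcdef
  have hKinj : Function.Injective (algebraMap Kf ℂ) := (algebraMap Kf ℂ).injective
  have hcoe : ∀ x : Kf, algebraMap Kf ℂ x = (x : ℂ) := fun _ => rfl
  have haev : ∀ x : Kf, aeval (x : ℂ) p = algebraMap Kf ℂ (aeval x p) := fun x =>
    Polynomial.aeval_algebraMap_apply ℂ x p
  have haeva : aeval a p = 0 := by
    apply hKinj
    rw [← haev, map_zero]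
    exact haevα
  have haevb : aeval b p = 0 := by
    apply hKinj
    rw [← haev, map_zero]
    exact haevβ
  have haevc : aeval c p = 0 := by
    apply hKinj
    rw [← haev, map_zero]
    exact haevγ
  have hminA : minpoly ℚ a = p :=
    (minpoly.eq_of_irreducible_of_monic (minpoly.irreducible hint) haeva
      (minpoly.monic hint)).symm
  have halga : IsAlgebraic ℚ a := (IsIntegral.of_finite ℚ a).isAlgebraic
  obtain ⟨σ, hσ⟩ := minpoly.exists_algEquiv_of_root' halga (x := b) (by rw [hminA]; exact haevb)
  obtain ⟨τ, hτ⟩ := minpoly.exists_algEquiv_of_root' halga (x := c) (by rw [hminA]; exact haevc)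
  -- scale to an algebraic integer
  have halgZ : IsAlgebraic ℤ a := (IsFractionRing.isAlgebraic_iff ℤ ℚ Kf).mpr halga
  obtain ⟨xint, d, hd0, hda⟩ : ∃ (x : integralClosure ℤ Kf) (y : ℤ), y ≠ 0 ∧
      algebraMap ℤ Kf y * a = x := by
    obtain ⟨y, hy, hi⟩ := halgZ.exists_integral_multiple
    exact ⟨⟨y • a, hi⟩, y, hy, (Algebra.smul_def y a).symm⟩
  set D : Kf := algebraMap ℤ Kf d with hDdef
  set A' : Kf := D * a with hA'def
  have hA'int : IsIntegral ℤ A' := by rw [hda]; exact xint.2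
  have hσD : σ D = D := by simp [hDdef]
  have hτD : τ D = D := by simp [hDdef]
  set B' : Kf := σ A' with hB'def
  set C' : Kf := τ A' with hC'def
  have hB' : B' = D * b := by rw [hB'def, hA'def, map_mul, hσD, hσ]
  have hC' : C' = D * c := by rw [hC'def, hA'def, map_mul, hτD, hτ]
  have hB'int : IsIntegral ℤ B' := map_isIntegral_int (σ : Kf →+* Kf) hA'int
  have hC'int : IsIntegral ℤ C' := map_isIntegral_int (τ : Kf →+* Kf) hA'int
  have hD0 : D ≠ 0 := by
    rw [hDdef]
    simpa using hd0
  have ha0 : a ≠ 0 := fun h => hα0 (by exact congrArg Subtype.val h)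
  have hb0 : b ≠ 0 := fun h => hβ0 (by exact congrArg Subtype.val h)
  have hA'0 : A' ≠ 0 := mul_ne_zero hD0 ha0
  have hB'0 : B' ≠ 0 := by rw [hB']; exact mul_ne_zero hD0 hb0
  have hab : a ^ 2 = b * c := by
    apply hKinj
    rw [map_pow, map_mul, hcoe, hcoe, hcoe]
    exact hrel
  have hsq : A' ^ 2 = B' * C' := by
    rw [hB', hC', hA'def, mul_pow, hab]
    ring
  have hC'0 : C' ≠ 0 := by
    intro h
    rw [h, mul_zero] at hsq
    exact hA'0 (pow_eq_zero_iff (n := 2) (by norm_num) |>.mp hsq)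
  -- Archimedean part: all embedding-norms of B' equal those of A'
  have hnormeq : ∀ φ : Kf →+* ℂ, ‖φ B'‖ = ‖φ A'‖ := by
    let e₁ : Equiv.Perm (Kf →+* ℂ) :=
      { toFun := fun φ => φ.comp (σ : Kf →+* Kf)
        invFun := fun φ => φ.comp (σ.symm : Kf →+* Kf)
        left_inv := fun φ => RingHom.ext fun x => by simp
        right_inv := fun φ => RingHom.ext fun x => by simp }
    let e₂ : Equiv.Perm (Kf →+* ℂ) :=
      { toFun := fun φ => φ.comp (τ : Kf →+* Kf)
        invFun := fun φ => φ.comp (τ.symm : Kf →+* Kf)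
        left_inv := fun φ => RingHom.ext fun x => by simp
        right_inv := fun φ => RingHom.ext fun x => by simp }
    set F : (Kf →+* ℂ) → ℝ := fun φ => Real.log ‖φ A'‖ with hFdef
    have hpos : ∀ (φ : Kf →+* ℂ) (x : Kf), x ≠ 0 → 0 < ‖φ x‖ := fun φ x hx =>
      norm_pos_iff.mpr ((map_ne_zero φ).mpr hx)
    have hFe₁ : ∀ φ : Kf →+* ℂ, F (e₁ φ) = Real.log ‖φ B'‖ := fun φ => rfl
    have hFe₂ : ∀ φ : Kf →+* ℂ, F (e₂ φ) = Real.log ‖φ C'‖ := fun φ => rfl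
    have hrelF : ∀ φ : Kf →+* ℂ, 2 * F φ = F (e₁ φ) + F (e₂ φ) := by
      intro φ
      rw [hFe₁, hFe₂]
      have h1 : φ A' ^ 2 = φ B' * φ C' := by rw [← map_pow, hsq, map_mul]
      have h2 : ‖φ A'‖ ^ 2 = ‖φ B'‖ * ‖φ C'‖ := by rw [← norm_pow, h1, norm_mul]
      have := congrArg Real.log h2
      rwa [Real.log_pow, Real.log_mul (hpos φ B' hB'0).ne' (hpos φ C' hC'0).ne',
        Nat.cast_ofNat] at this
    have hkey := keyA F e₁ e₂ Finset.univ (fun i _ => Finset.mem_univ i)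
      (fun i _ => Finset.mem_univ i) (fun i _ => Finset.mem_univ i) hrelF
    intro φ
    have := hkey φ
    rw [hFe₁] at this
    calc ‖φ B'‖ = Real.exp (Real.log ‖φ B'‖) := (Real.exp_log (hpos φ B' hB'0)).symm
      _ = Real.exp (Real.log ‖φ A'‖) := by rw [this]
      _ = ‖φ A'‖ := Real.exp_log (hpos φ A' hA'0)
  -- Now the finite-place (ideal) part
  set O := 𝓞 Kf with hOdef
  set Ai : O := ⟨A', hA'int⟩ with hAidef
  set Bi : O := ⟨B', hB'int⟩ with hBidef
  set Ci : O := ⟨C', hC'int⟩ with hCidef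
  have hcoeA : algebraMap O Kf Ai = A' := rfl
  have hcoeB : algebraMap O Kf Bi = B' := rfl
  have hcoeC : algebraMap O Kf Ci = C' := rfl
  have hAi0 : Ai ≠ 0 := fun h => hA'0 (by rw [← hcoeA, h, map_zero])
  have hBi0 : Bi ≠ 0 := fun h => hB'0 (by rw [← hcoeB, h, map_zero])
  have hCi0 : Ci ≠ 0 := fun h => hC'0 (by rw [← hcoeC, h, map_zero])
  have hsqO : Ai ^ 2 = Bi * Ci := by
    apply NumberField.RingOfIntegers.ext
    push_cast [map_pow, map_mul, hcoeA, hcoeB, hcoeC]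
    exact hsq
  set Φ : O ≃+* O := NumberField.RingOfIntegers.mapRingEquiv σ with hΦdef
  have hΦA : Φ Ai = Bi := NumberField.RingOfIntegers.ext rfl
  set I : Ideal O := Ideal.span {Ai} with hIdef
  set J : Ideal O := Ideal.span {Bi} with hJdef
  set L : Ideal O := Ideal.span {Ci} with hLdef
  have hI0 : I ≠ ⊥ := by rw [hIdef, Ne, Ideal.span_singleton_eq_bot]; exact hAi0
  have hJ0 : J ≠ ⊥ := by rw [hJdef, Ne, Ideal.span_singleton_eq_bot]; exact hBi0
  have hL0 : L ≠ ⊥ := by rw [hLdef, Ne, Ideal.span_singleton_eq_bot]; exact hCi0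
  have hJmap : J = Ideal.map (Φ : O →+* O) I := by
    rw [hIdef, hJdef, Ideal.map_span, Set.image_singleton]
    norm_num [hΦA]
  have hnfJ : UniqueFactorizationMonoid.normalizedFactors J
      = (UniqueFactorizationMonoid.normalizedFactors I).map (Ideal.map (Φ : O →+* O)) := by
    rw [hJmap]; exact nf_ideal_map Φ I hI0
  have hIJL : I ^ 2 = J * L := by
    rw [hIdef, hJdef, hLdef, Ideal.span_singleton_pow, Ideal.span_singleton_mul_span_singleton,
      hsqO]
  have hnfsum : (2 : ℕ) • UniqueFactorizationMonoid.normalizedFactors I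
      = UniqueFactorizationMonoid.normalizedFactors J
        + UniqueFactorizationMonoid.normalizedFactors L := by
    rw [← UniqueFactorizationMonoid.normalizedFactors_pow, hIJL,
      UniqueFactorizationMonoid.normalizedFactors_mul hJ0 hL0]
  set E₁ : Equiv.Perm (Ideal O) :=
    { toFun := Ideal.map (Φ : O →+* O)
      invFun := Ideal.map (Φ.symm : O →+* O)
      left_inv := fun P => Ideal.map_of_equiv (I := P) Φ
      right_inv := fun P => by simpa using Ideal.map_of_equiv (I := P) Φ.symm } with hE₁def
  have hE₁app : ∀ P, E₁ P = Ideal.map (Φ : O →+* O) P := fun P => by rw [hE₁def]; rfl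
  have hginj₁ : Function.Injective (Ideal.map (Φ : O →+* O) : Ideal O → Ideal O) := by
    intro P Q h
    have := congrArg (Ideal.map (Φ.symm : O →+* O)) h
    rwa [Ideal.map_of_equiv (I := P) Φ, Ideal.map_of_equiv (I := Q) Φ] at this
  have hcntJ : ∀ P : Ideal O,
      (UniqueFactorizationMonoid.normalizedFactors J).count P
        = (UniqueFactorizationMonoid.normalizedFactors I).count (E₁.symm P) := by
    intro P
    conv_lhs => rw [hnfJ, show P = Ideal.map (Φ : O →+* O) (E₁.symm P) from by
      rw [← hE₁app, Equiv.apply_symm_apply]]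
    exact Multiset.count_map_eq_count' _ _ hginj₁ _
  -- the τ side
  set Ψ : O ≃+* O := NumberField.RingOfIntegers.mapRingEquiv τ with hΨdef
  have hΨA : Ψ Ai = Ci := NumberField.RingOfIntegers.ext rfl
  have hLmap : L = Ideal.map (Ψ : O →+* O) I := by
    rw [hIdef, hLdef, Ideal.map_span, Set.image_singleton]
    norm_num [hΨA]
  have hnfL : UniqueFactorizationMonoid.normalizedFactors L
      = (UniqueFactorizationMonoid.normalizedFactors I).map (Ideal.map (Ψ : O →+* O)) := by
    rw [hLmap]; exact nf_ideal_map Ψ I hI0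
  set E₂ : Equiv.Perm (Ideal O) :=
    { toFun := Ideal.map (Ψ : O →+* O)
      invFun := Ideal.map (Ψ.symm : O →+* O)
      left_inv := fun P => Ideal.map_of_equiv (I := P) Ψ
      right_inv := fun P => by simpa using Ideal.map_of_equiv (I := P) Ψ.symm } with hE₂def
  have hE₂app : ∀ P, E₂ P = Ideal.map (Ψ : O →+* O) P := fun P => by rw [hE₂def]; rfl
  have hginj₂ : Function.Injective (Ideal.map (Ψ : O →+* O) : Ideal O → Ideal O) := by
    intro P Q h
    have := congrArg (Ideal.map (Ψ.symm : O →+* O)) h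
    rwa [Ideal.map_of_equiv (I := P) Ψ, Ideal.map_of_equiv (I := Q) Ψ] at this
  have hcntL : ∀ P : Ideal O,
      (UniqueFactorizationMonoid.normalizedFactors L).count P
        = (UniqueFactorizationMonoid.normalizedFactors I).count (E₂.symm P) := by
    intro P
    conv_lhs => rw [hnfL, show P = Ideal.map (Ψ : O →+* O) (E₂.symm P) from by
      rw [← hE₂app, Equiv.apply_symm_apply]]
    exact Multiset.count_map_eq_count' _ _ hginj₂ _
  -- apply the combinatorial lemma
  set fZ : Ideal O → ℤ :=
    fun P => ((UniqueFactorizationMonoid.normalizedFactors I).count P : ℤ) with hfZdef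
  set S : Finset (Ideal O) := (UniqueFactorizationMonoid.normalizedFactors I
      + UniqueFactorizationMonoid.normalizedFactors J
      + UniqueFactorizationMonoid.normalizedFactors L).toFinset with hSdef
  have h1S : ∀ P, fZ P ≠ 0 → P ∈ S := by
    intro P h
    have : P ∈ UniqueFactorizationMonoid.normalizedFactors I := by
      rw [← Multiset.count_pos]
      refine Nat.pos_of_ne_zero fun hc => h ?_
      simp only [hfZdef]
      exact_mod_cast congrArg (Nat.cast : ℕ → ℤ) hc
    rw [hSdef, Multiset.mem_toFinset]
    simp only [Multiset.mem_add]
    tauto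
  have h2S : ∀ P, fZ (E₁.symm P) ≠ 0 → P ∈ S := by
    intro P h
    have : P ∈ UniqueFactorizationMonoid.normalizedFactors J := by
      rw [← Multiset.count_pos]
      refine Nat.pos_of_ne_zero fun hc => h ?_
      simp only [hfZdef]
      rw [hcntJ P] at hc
      exact_mod_cast congrArg (Nat.cast : ℕ → ℤ) hc
    rw [hSdef, Multiset.mem_toFinset]
    simp only [Multiset.mem_add]
    tauto
  have h3S : ∀ P, fZ (E₂.symm P) ≠ 0 → P ∈ S := by
    intro P h
    have : P ∈ UniqueFactorizationMonoid.normalizedFactors L := by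
      rw [← Multiset.count_pos]
      refine Nat.pos_of_ne_zero fun hc => h ?_
      simp only [hfZdef]
      rw [hcntL P] at hc
      exact_mod_cast congrArg (Nat.cast : ℕ → ℤ) hc
    rw [hSdef, Multiset.mem_toFinset]
    simp only [Multiset.mem_add]
    tauto
  have hrelZ : ∀ P, 2 * fZ P = fZ (E₁.symm P) + fZ (E₂.symm P) := by
    intro P
    have hc := congrArg (Multiset.count P) hnfsum
    rw [Multiset.count_nsmul, Multiset.count_add] at hc
    rw [hfZdef]
    simp only
    rw [← hcntJ, ← hcntL]
    exact_mod_cast hc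
  have hkeyZ := keyA fZ E₁.symm E₂.symm S h1S h2S h3S hrelZ
  have hnfJI : UniqueFactorizationMonoid.normalizedFactors J
      = UniqueFactorizationMonoid.normalizedFactors I := by
    refine Multiset.ext.mpr fun P => ?_
    have hk := hkeyZ P
    rw [hfZdef] at hk
    simp only at hk
    rw [hcntJ P]
    exact_mod_cast hk
  have hJI : J = I := by
    have h1 := associated_iff_eq.mp (UniqueFactorizationMonoid.prod_normalizedFactors hJ0)
    have h2 := associated_iff_eq.mp (UniqueFactorizationMonoid.prod_normalizedFactors hI0)
    rw [← h1, ← h2, hnfJI]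
  have hassoc : Associated Bi Ai := by
    rw [← Ideal.span_singleton_eq_span_singleton]
    rw [hIdef] at hJI
    rw [hJdef] at hJI
    exact hJI
  obtain ⟨u, hu⟩ := hassoc
  -- endgame via Kronecker's theorem
  set x' : Kf := algebraMap O Kf ((u : O)) with hx'def
  have hxint : IsIntegral ℤ x' := NumberField.RingOfIntegers.isIntegral_coe _
  have hBx : B' * x' = A' := by
    have := congrArg (algebraMap O Kf) hu
    rwa [map_mul, hcoeB, hcoeA] at this
  have hnorm1 : ∀ φ : Kf →+* ℂ, ‖φ x'‖ = 1 := by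
    intro φ
    have h1 : φ B' * φ x' = φ A' := by rw [← map_mul, hBx]
    have h2 : ‖φ B'‖ * ‖φ x'‖ = ‖φ A'‖ := by rw [← norm_mul, h1]
    have hφB : ‖φ B'‖ ≠ 0 := norm_ne_zero_iff.mpr ((map_ne_zero φ).mpr hB'0)
    exact mul_left_cancel₀ hφB (by rw [h2, hnormeq φ, mul_one])
  obtain ⟨n, hn, hxn⟩ := NumberField.Embeddings.pow_eq_one_of_norm_eq_one Kf ℂ hxint hnorm1
  refine ⟨n, hn, ?_⟩
  have hfin : algebraMap Kf ℂ x' = α / β := by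
    have hDβ : algebraMap Kf ℂ B' ≠ 0 := (_root_.map_ne_zero _).mpr hB'0
    have hDc : algebraMap Kf ℂ D ≠ 0 := (_root_.map_ne_zero _).mpr hD0
    have h1 : algebraMap Kf ℂ x' * algebraMap Kf ℂ B' = algebraMap Kf ℂ A' := by
      rw [← map_mul, mul_comm x' B', hBx]
    have h2 : algebraMap Kf ℂ A' = algebraMap Kf ℂ D * α := by rw [hA'def, map_mul]; rfl
    have h3 : algebraMap Kf ℂ B' = algebraMap Kf ℂ D * β := by rw [hB', map_mul]; rfl
    rw [eq_div_iff (by exact fun h => hβ0 h)]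
    apply mul_left_cancel₀ hDc
    calc algebraMap Kf ℂ D * (algebraMap Kf ℂ x' * β)
        = algebraMap Kf ℂ x' * (algebraMap Kf ℂ D * β) := by ring
      _ = algebraMap Kf ℂ x' * algebraMap Kf ℂ B' := by rw [← h3]
      _ = algebraMap Kf ℂ A' := h1
      _ = algebraMap Kf ℂ D * α := h2
  rw [← hfin, ← map_pow, hxn, map_one]
end

section
/- Let f ∈ ℤ[x] be the characteristic polynomial of a real matrix with roots r e^{±iθ}, r e^{±iψ} (r > 1) and suppose the four dominant roots α = re^{iθ}, ᾱ, β = re^{iψ}, β̄ are distinct with no ratio of distinct roots a root of unity. Then the sequence a_n = (rⁿ + r^{−n})(2cos(nθ) + 2cos(nψ)) takes infinitely many distinct values as n ranges over ℕ. -/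
open Polynomial Complex

lemma cos_sum_bound' (φ : ℝ) (h : Complex.exp (φ * I) ≠ 1) (N : ℕ) :
    |∑ n ∈ Finset.range N, Real.cos (n * φ)| ≤ 2 / ‖Complex.exp ((φ : ℂ) * I) - 1‖ := by
  set z := Complex.exp ((φ : ℂ) * I) with hz
  have hz1 : ‖z‖ = 1 := by
    simp [hz, Complex.norm_exp_ofReal_mul_I]
  have hre : ∀ n : ℕ, (z ^ n).re = Real.cos (n * φ) := by
    intro n
    rw [hz, ← Complex.exp_nat_mul]
    have : (n : ℂ) * ((φ : ℂ) * I) = ((n * φ : ℝ) : ℂ) * I := by push_cast; ring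
    rw [this, Complex.exp_ofReal_mul_I_re]
  have hsum : ∑ n ∈ Finset.range N, Real.cos (n * φ)
      = (∑ n ∈ Finset.range N, z ^ n).re := by
    rw [Complex.re_sum]
    exact Finset.sum_congr rfl fun n _ => (hre n).symm
  rw [hsum, geom_sum_eq h]
  have h1 : ‖z ^ N - 1‖ ≤ 2 := by
    calc ‖z ^ N - 1‖ ≤ ‖z ^ N‖ + ‖(1 : ℂ)‖ := norm_sub_le _ _
    _ = 2 := by rw [norm_pow, hz1]; norm_num
  have h2 : (0:ℝ) < ‖z - 1‖ := by
    rw [norm_pos_iff]; exact sub_ne_zero.mpr h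
  calc |((z ^ N - 1) / (z - 1)).re| ≤ ‖(z ^ N - 1) / (z - 1)‖ := Complex.abs_re_le_norm _
  _ = ‖z ^ N - 1‖ / ‖z - 1‖ := norm_div _ _
  _ ≤ 2 / ‖z - 1‖ := by gcongr

/-- The power-sum sequence aₙ = (rⁿ + r⁻ⁿ)(2cos(nθ) + 2cos(nψ)) associated with a
non-degenerate integer polynomial with roots r^{±1}e^{±iθ}, r^{±1}e^{±iψ} takes
infinitely many values. -/
theorem power_sum_infinitely_many_values (r θ ψ : ℝ) (hr : 1 < r)
    (f : Polynomial ℤ)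
    (hf : f.map (Int.castRingHom ℂ) =
      (X - C ((r : ℂ) * Complex.exp (θ * I))) * (X - C ((r : ℂ) * Complex.exp (-θ * I))) *
      (X - C ((r : ℂ) * Complex.exp (ψ * I))) * (X - C ((r : ℂ) * Complex.exp (-ψ * I))) *
      (X - C ((r : ℂ)⁻¹ * Complex.exp (θ * I))) * (X - C ((r : ℂ)⁻¹ * Complex.exp (-θ * I))) *
      (X - C ((r : ℂ)⁻¹ * Complex.exp (ψ * I))) * (X - C ((r : ℂ)⁻¹ * Complex.exp (-ψ * I))))
    (hdist : ((r : ℂ) * Complex.exp (θ * I) ≠ (r : ℂ) * Complex.exp (-θ * I)) ∧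
      ((r : ℂ) * Complex.exp (θ * I) ≠ (r : ℂ) * Complex.exp (ψ * I)) ∧
      ((r : ℂ) * Complex.exp (θ * I) ≠ (r : ℂ) * Complex.exp (-ψ * I)) ∧
      ((r : ℂ) * Complex.exp (-θ * I) ≠ (r : ℂ) * Complex.exp (ψ * I)) ∧
      ((r : ℂ) * Complex.exp (-θ * I) ≠ (r : ℂ) * Complex.exp (-ψ * I)) ∧
      ((r : ℂ) * Complex.exp (ψ * I) ≠ (r : ℂ) * Complex.exp (-ψ * I)))
    (hND : ∀ lam mu : ℂ, (f.map (Int.castRingHom ℂ)).IsRoot lam →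
      (f.map (Int.castRingHom ℂ)).IsRoot mu → lam ≠ mu →
      ∀ n : ℕ, 0 < n → (lam / mu) ^ n ≠ 1) :
    (Set.range fun n : ℕ =>
      (r ^ n + r⁻¹ ^ n) * (2 * Real.cos (n * θ) + 2 * Real.cos (n * ψ))).Infinite := by
  have hr0 : (0:ℝ) < r := lt_trans one_pos hr
  have hrC : (r : ℂ) ≠ 0 := Complex.ofReal_ne_zero.mpr hr0.ne'
  -- the four dominant roots
  have hroot : ∀ c : ℂ, ((r:ℂ) * Complex.exp (θ * I) = c ∨ (r:ℂ) * Complex.exp (-θ * I) = c ∨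
      (r:ℂ) * Complex.exp (ψ * I) = c ∨ (r:ℂ) * Complex.exp (-ψ * I) = c) →
      (f.map (Int.castRingHom ℂ)).IsRoot c := by
    intro c hc
    rw [Polynomial.IsRoot, hf]
    simp only [eval_mul, eval_sub, eval_X, eval_C]
    rcases hc with h | h | h | h <;> rw [← h] <;> ring
  have h1 := hroot _ (Or.inl rfl)
  have h2 := hroot _ (Or.inr (Or.inl rfl))
  have h3 := hroot _ (Or.inr (Or.inr (Or.inl rfl)))
  have h4 := hroot _ (Or.inr (Or.inr (Or.inr rfl)))
  -- ratio facts
  have hratio : ∀ a b : ℝ, ((r:ℂ) * Complex.exp (a * I)) / ((r:ℂ) * Complex.exp (b * I))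
      = Complex.exp (((a - b : ℝ) : ℂ) * I) := by
    intro a b
    rw [mul_div_mul_left _ _ hrC, ← Complex.exp_sub]
    congr 1; push_cast; ring
  have hne1 : ∀ lam mu : ℂ, (f.map (Int.castRingHom ℂ)).IsRoot lam →
      (f.map (Int.castRingHom ℂ)).IsRoot mu → lam ≠ mu → lam / mu ≠ 1 := by
    intro lam mu ha hb hab
    have := hND lam mu ha hb hab 1 one_pos
    rwa [pow_one] at this
  have e2θ : Complex.exp (((2*θ : ℝ) : ℂ) * I) ≠ 1 := by
    have := hne1 _ _ h1 h2 hdist.1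
    rw [show ((r:ℂ) * Complex.exp (-θ * I)) = (r:ℂ) * Complex.exp ((-θ : ℝ) * I) by push_cast; ring_nf] at this
    rw [hratio θ (-θ)] at this
    convert this using 3; ring
  have e2ψ : Complex.exp (((2*ψ : ℝ) : ℂ) * I) ≠ 1 := by
    have := hne1 _ _ h3 h4 hdist.2.2.2.2.2
    rw [show ((r:ℂ) * Complex.exp (-ψ * I)) = (r:ℂ) * Complex.exp ((-ψ : ℝ) * I) by push_cast; ring_nf] at this
    rw [hratio ψ (-ψ)] at this
    convert this using 3; ring
  have eθψ : Complex.exp (((θ + ψ : ℝ) : ℂ) * I) ≠ 1 := by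
    have := hne1 _ _ h1 h4 hdist.2.2.1
    rw [show ((r:ℂ) * Complex.exp (-ψ * I)) = (r:ℂ) * Complex.exp ((-ψ : ℝ) * I) by push_cast; ring_nf] at this
    rw [hratio θ (-ψ)] at this
    convert this using 3; ring
  have eθψ' : Complex.exp (((θ - ψ : ℝ) : ℂ) * I) ≠ 1 := by
    have := hne1 _ _ h1 h3 hdist.2.1
    rwa [hratio θ ψ] at this
  -- suppose finitely many values
  by_contra hfin
  rw [Set.not_infinite] at hfin
  set s : ℕ → ℝ := fun n => 2 * Real.cos (n * θ) + 2 * Real.cos (n * ψ) with hs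
  obtain ⟨M, hM⟩ : ∃ M : ℝ, ∀ n : ℕ, |(r ^ n + r⁻¹ ^ n) * s n| ≤ M := by
    obtain ⟨M, hM⟩ := (hfin.image (fun x : ℝ => |x|)).bddAbove
    exact ⟨M, fun n => hM (Set.mem_image_of_mem _ (Set.mem_range_self n))⟩
  have hM0 : 0 ≤ M := le_trans (abs_nonneg _) (hM 0)
  -- decay of s
  have hsb : ∀ n : ℕ, |s n| ≤ M * (r⁻¹) ^ n := by
    intro n
    have hp : (0:ℝ) < r ^ n := pow_pos hr0 n
    have hq : (0:ℝ) < r⁻¹ ^ n := pow_pos (inv_pos.mpr hr0) n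
    have h5 : (r ^ n + r⁻¹ ^ n) * |s n| ≤ M := by
      have := hM n
      rwa [abs_mul, abs_of_pos (by linarith)] at this
    have h6 : r ^ n * |s n| ≤ M := by nlinarith [abs_nonneg (s n)]
    have h9 : M * r⁻¹ ^ n = M / r ^ n := by rw [inv_pow]; ring
    rw [h9, le_div_iff₀ hp]
    linarith [h6]
  -- pointwise identity
  have hid : ∀ n : ℕ, (s n) ^ 2 = 4 + 2 * Real.cos (n * (2*θ)) + 2 * Real.cos (n * (2*ψ))
      + 4 * Real.cos (n * (θ + ψ)) + 4 * Real.cos (n * (θ - ψ)) := by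
    intro n
    have c1 : Real.cos (n * (2*θ)) = 2 * Real.cos (n * θ) ^ 2 - 1 := by
      rw [show (n : ℝ) * (2*θ) = 2 * (n * θ) by ring, Real.cos_two_mul]
    have c2 : Real.cos (n * (2*ψ)) = 2 * Real.cos (n * ψ) ^ 2 - 1 := by
      rw [show (n : ℝ) * (2*ψ) = 2 * (n * ψ) by ring, Real.cos_two_mul]
    have c3 : Real.cos (n * (θ + ψ)) + Real.cos (n * (θ - ψ))
        = 2 * Real.cos (n * θ) * Real.cos (n * ψ) := by
      rw [show (n : ℝ) * (θ + ψ) = n * θ + n * ψ by ring,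
          show (n : ℝ) * (θ - ψ) = n * θ - n * ψ by ring,
          Real.cos_add, Real.cos_sub]
      ring
    simp only [hs]
    nlinarith [c1, c2, c3]
  -- trig constants
  set C1 := 2 / ‖Complex.exp (((2*θ : ℝ) : ℂ) * I) - 1‖ with hC1
  set C2 := 2 / ‖Complex.exp (((2*ψ : ℝ) : ℂ) * I) - 1‖ with hC2
  set C3 := 2 / ‖Complex.exp (((θ + ψ : ℝ) : ℂ) * I) - 1‖ with hC3
  set C4 := 2 / ‖Complex.exp (((θ - ψ : ℝ) : ℂ) * I) - 1‖ with hC4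
  -- geometric bound on sum of squares
  have hq1 : (r⁻¹ : ℝ) ^ 2 < 1 := by
    have : r⁻¹ < 1 := inv_lt_one_of_one_lt₀ hr
    nlinarith [inv_pos.mpr hr0]
  have hq0 : (0:ℝ) ≤ (r⁻¹ : ℝ) ^ 2 := sq_nonneg _
  set B := M ^ 2 / (1 - r⁻¹ ^ 2) with hB
  have hsum_sq : ∀ N : ℕ, ∑ n ∈ Finset.range N, (s n) ^ 2 ≤ B := by
    intro N
    have step : ∀ n ∈ Finset.range N, (s n) ^ 2 ≤ M ^ 2 * ((r⁻¹ ^ 2) ^ n) := by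
      intro n _
      have := hsb n
      have h7 : (s n) ^ 2 ≤ (M * r⁻¹ ^ n) ^ 2 := by
        rw [← _root_.sq_abs (s n)]
        exact pow_le_pow_left₀ (abs_nonneg _) this 2
      calc (s n) ^ 2 ≤ (M * r⁻¹ ^ n) ^ 2 := h7
        _ = M ^ 2 * ((r⁻¹ ^ 2) ^ n) := by ring
    calc ∑ n ∈ Finset.range N, (s n) ^ 2
        ≤ ∑ n ∈ Finset.range N, M ^ 2 * ((r⁻¹ ^ 2) ^ n) := Finset.sum_le_sum step
      _ = M ^ 2 * ∑ n ∈ Finset.range N, (r⁻¹ ^ 2) ^ n := by rw [Finset.mul_sum]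
      _ ≤ M ^ 2 * (1 / (1 - r⁻¹ ^ 2)) := by
          refine mul_le_mul_of_nonneg_left ?_ (sq_nonneg M)
          have h8 : ∑ n ∈ Finset.range N, (r⁻¹ ^ 2) ^ n = (1 - (r⁻¹ ^ 2) ^ N) / (1 - r⁻¹ ^ 2) := by
            rw [geom_sum_eq (by linarith : (r⁻¹:ℝ) ^ 2 ≠ 1)]
            rw [div_eq_div_iff (by linarith) (by linarith)]
            ring
          rw [h8]
          have h10 : (0:ℝ) ≤ (r⁻¹ ^ 2) ^ N := pow_nonneg hq0 N
          apply div_le_div_of_nonneg_right ?_ (by linarith)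
          linarith
      _ = B := by rw [hB]; ring
  -- the key lower bound: 4N ≤ sum + constants
  have key : ∀ N : ℕ, 4 * (N : ℝ) ≤ (∑ n ∈ Finset.range N, (s n) ^ 2)
      + (2 * C1 + 2 * C2 + 4 * C3 + 4 * C4) := by
    intro N
    have hsplit : ∑ n ∈ Finset.range N, (s n) ^ 2
        = 4 * N + 2 * (∑ n ∈ Finset.range N, Real.cos (n * (2*θ)))
          + 2 * (∑ n ∈ Finset.range N, Real.cos (n * (2*ψ)))
          + 4 * (∑ n ∈ Finset.range N, Real.cos (n * (θ + ψ)))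
          + 4 * (∑ n ∈ Finset.range N, Real.cos (n * (θ - ψ))) := by
      rw [Finset.sum_congr rfl (fun n _ => hid n)]
      simp [Finset.sum_add_distrib, Finset.mul_sum]
      ring
    have b1 := cos_sum_bound' (2*θ) e2θ N
    have b2 := cos_sum_bound' (2*ψ) e2ψ N
    have b3 := cos_sum_bound' (θ+ψ) eθψ N
    have b4 := cos_sum_bound' (θ-ψ) eθψ' N
    rw [hsplit]
    rw [abs_le] at b1 b2 b3 b4
    rw [← hC1] at b1; rw [← hC2] at b2; rw [← hC3] at b3; rw [← hC4] at b4
    linarith [b1.1, b2.1, b3.1, b4.1]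
  obtain ⟨N, hN⟩ := exists_nat_gt ((B + (2 * C1 + 2 * C2 + 4 * C3 + 4 * C4)) / 4)
  have := key N
  have := hsum_sq N
  linarith
end

section
/- Let α ∈ ℂ be an algebraic integer with |α| = 1 that is a unimodular unit lying in a CM-field closed under complex conjugation whose Galois group contains complex conjugation in its centre. If α and all of its Galois conjugates have absolute value 1, then α is a root of unity. -/
open Polynomial

/-- Kronecker: an algebraic integer all of whose complex conjugates (roots of its minimal
polynomial) have absolute value exactly 1 is a root of unity. -/
theorem all_conjugates_on_unit_circle_root_of_unity (α : ℂ) (hint : IsIntegral ℤ α)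
    (habs : ∀ z : ℂ, ((minpoly ℤ α).map (Int.castRingHom ℂ)).IsRoot z → ‖z‖ = 1) :
    ∃ n : ℕ, 0 < n ∧ α ^ n = 1 := by
  have hratint : IsIntegral ℚ α := hint.tower_top
  let K := IntermediateField.adjoin ℚ ({α} : Set ℂ)
  haveI : FiniteDimensional ℚ K :=
    IntermediateField.adjoin.finiteDimensional hratint
  haveI : NumberField K := ⟨⟩
  set x : K := IntermediateField.AdjoinSimple.gen ℚ α with hx
  have hxval : (x : ℂ) = α := rfl
  have hxi : IsIntegral ℤ x := by
    rw [show IsIntegral ℤ x ↔ IsIntegral ℤ (algebraMap K ℂ x) from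
      (isIntegral_algebraMap_iff (algebraMap K ℂ).injective).symm]
    exact hint
  have hminpoly : minpoly ℤ x = minpoly ℤ α := by
    have := minpoly.algebraMap_eq (A := ℤ) (algebraMap K ℂ).injective x
    simpa [hxval] using this.symm
  have hnorm : ∀ φ : K →+* ℂ, ‖φ x‖ = 1 := by
    intro φ
    apply habs
    have haev : aeval x (minpoly ℤ x) = 0 := minpoly.aeval ℤ x
    show ((minpoly ℤ α).map (Int.castRingHom ℂ)).eval (φ x) = 0
    rw [← hminpoly, eval_map, ← algebraMap_int_eq, ← aeval_def,
      show φ x = (φ.toRatAlgHom.restrictScalars ℤ) x from rfl,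
      aeval_algHom_apply, haev, map_zero]
  obtain ⟨n, hn, hxn⟩ := NumberField.Embeddings.pow_eq_one_of_norm_eq_one K ℂ hxi hnorm
  refine ⟨n, hn, ?_⟩
  have := congrArg (algebraMap K ℂ) hxn
  simpa [hxval] using this
end
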